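/- arXiv:2105.01413 — 6 statements merged into one kernel-verified Lean document; each statement's English description precedes it below -/
import Mathlib

section
/- Let G be a digraph with at least two vertices and let H be its underlying undirected graph. Then mimw(H) ≤ bimimw(G) and lmimw(H) ≤ lbimimw(G). -/
open scoped Classical

/-- An induced matching in a digraph with edge relation `D`: a finite set of edges of `D`,
no two of which share an endpoint, such that no edge of `D` joins an endpoint of one
matching edge to an endpoint of a different matching edge. -/
def IsIndMatching {V : Type} (D : V → V → Prop) (M : Finset (V × V)) : Prop :=
  (∀ e ∈ M, D e.1 e.2) ∧
    ∀ e ∈ M, ∀ f ∈ M, e ≠ f →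
      ∀ x, (x = e.1 ∨ x = e.2) → ∀ y, (y = f.1 ∨ y = f.2) → x ≠ y ∧ ¬D x y

/-- `ν(D)`: the maximum size of an induced matching in the digraph `D`. -/
noncomputable def nu {V : Type} (D : V → V → Prop) : ℕ :=
  sSup {n | ∃ M : Finset (V × V), IsIndMatching D M ∧ M.card = n}

/-- The bipartite digraph `G[A→B]`, whose edges are the edges of `E` from `A` to `B`. -/
def cutRel {V : Type} (E : V → V → Prop) (A B : Set V) : V → V → Prop :=
  fun x y => x ∈ A ∧ y ∈ B ∧ E x y

/-- `bimim_G(A) = ν(G[A→Ā]) + ν(G[Ā→A])`. -/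
noncomputable def bimimCut {V : Type} (E : V → V → Prop) (A : Set V) : ℕ :=
  nu (cutRel E A Aᶜ) + nu (cutRel E Aᶜ A)

/-- For an undirected graph `G`, `mim_G(A) = ν(G[A, Ā])`. -/
noncomputable def mimCut {V : Type} (G : SimpleGraph V) (A : Set V) : ℕ :=
  nu (cutRel G.Adj A Aᶜ)
/-- A caterpillar: a tree containing a path such that every vertex outside the path
has a neighbor on the path. -/
def IsCaterpillar {L : Type} (T : SimpleGraph L) : Prop :=
  ∃ (u v : L) (p : T.Walk u v), p.IsPath ∧
    ∀ w : L, w ∉ p.support → ∃ x ∈ p.support, T.Adj w x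

/-- A branch decomposition of a (di)graph on vertex set `V`: a subcubic tree (at least
two vertices, every internal vertex of degree 3) together with a bijection from `V`
to the set of leaves of the tree. -/
structure BranchDecomp (V : Type) where
  L : Type
  finL : Finite L
  T : SimpleGraph L
  isTree : T.IsTree
  two_le : 2 ≤ Nat.card L
  subcubic : ∀ t : L, (T.neighborSet t).ncard = 1 ∨ (T.neighborSet t).ncard = 3
  toLeaf : V → L
  inj : Function.Injective toLeaf
  mem_leaf : ∀ v : V, (T.neighborSet (toLeaf v)).ncard = 1
  surj : ∀ t : L, (T.neighborSet t).ncard = 1 → ∃ v, toLeaf v = t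

/-- The side `A_e` of the cut induced by the tree edge `{t₁, t₂}`: the set of vertices
mapped to leaves in the component of `T - e` containing `t₁`. -/
def BranchDecomp.side {V : Type} (bd : BranchDecomp V) (t₁ t₂ : bd.L) : Set V :=
  {v | (bd.T.deleteEdges {s(t₁, t₂)}).Reachable t₁ (bd.toLeaf v)}

/-- The bi-mim-width of a branch decomposition with respect to a digraph. -/
noncomputable def BranchDecomp.width {V : Type} (bd : BranchDecomp V)
    (E : V → V → Prop) : ℕ :=
  sSup {n | ∃ t₁ t₂, bd.T.Adj t₁ t₂ ∧ n = bimimCut E (bd.side t₁ t₂)}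

/-- The mim-width of a branch decomposition with respect to an undirected graph. -/
noncomputable def BranchDecomp.uwidth {V : Type} (bd : BranchDecomp V)
    (G : SimpleGraph V) : ℕ :=
  sSup {n | ∃ t₁ t₂, bd.T.Adj t₁ t₂ ∧ n = mimCut G (bd.side t₁ t₂)}

/-- The bi-mim-width of a digraph. -/
noncomputable def bimimw {V : Type} (E : V → V → Prop) : ℕ :=
  sInf {n | ∃ bd : BranchDecomp V, bd.width E = n}

/-- The linear bi-mim-width of a digraph. -/
noncomputable def lbimimw {V : Type} (E : V → V → Prop) : ℕ :=
  sInf {n | ∃ bd : BranchDecomp V, IsCaterpillar bd.T ∧ bd.width E = n}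

/-- The mim-width of an undirected graph. -/
noncomputable def mimw {V : Type} (G : SimpleGraph V) : ℕ :=
  sInf {n | ∃ bd : BranchDecomp V, bd.uwidth G = n}

/-- The linear mim-width of an undirected graph. -/
noncomputable def lmimw {V : Type} (G : SimpleGraph V) : ℕ :=
  sInf {n | ∃ bd : BranchDecomp V, IsCaterpillar bd.T ∧ bd.uwidth G = n}

set_option linter.unusedSectionVars false
set_option linter.unusedVariables false

section Aux

variable {V : Type} [Fintype V]

lemma isIndMatching_empty {D : V → V → Prop} : IsIndMatching D (∅ : Finset (V × V)) :=
  ⟨fun e he => absurd he (Finset.notMem_empty e),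
   fun e he => absurd he (Finset.notMem_empty e)⟩

lemma nu_bdd (D : V → V → Prop) :
    BddAbove {n | ∃ M : Finset (V × V), IsIndMatching D M ∧ M.card = n} :=
  ⟨Fintype.card (V × V), fun n hn => by
    obtain ⟨M, _, hM⟩ := hn
    exact hM ▸ Finset.card_le_univ M⟩

lemma nu_le_card (D : V → V → Prop) : nu D ≤ Fintype.card (V × V) := by
  refine csSup_le ⟨0, ∅, isIndMatching_empty, rfl⟩ ?_
  rintro n ⟨M, _, rfl⟩
  exact Finset.card_le_univ M

lemma card_le_nu {D : V → V → Prop} {M : Finset (V × V)} (h : IsIndMatching D M) :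
    M.card ≤ nu D :=
  le_csSup (nu_bdd D) ⟨M, h, rfl⟩

lemma mimCut_le_bimimCut (E : V → V → Prop) (A : Set V) :
    mimCut (SimpleGraph.fromRel E) A ≤ bimimCut E A := by
  refine csSup_le ⟨0, ∅, isIndMatching_empty, rfl⟩ ?_
  rintro n ⟨M, hM, rfl⟩
  set D : V → V → Prop := cutRel (SimpleGraph.fromRel E).Adj A Aᶜ with hD
  set M₁ : Finset (V × V) := M.filter (fun e => E e.1 e.2) with hM₁
  set M₂ : Finset (V × V) := (M.filter (fun e => ¬ E e.1 e.2)).image Prod.swap with hM₂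
  have hcard : M₁.card + M₂.card = M.card := by
    rw [hM₂, Finset.card_image_of_injective _ Prod.swap_injective]
    exact Finset.card_filter_add_card_filter_not _
  -- M₁ is an induced matching in G[A→Aᶜ]
  have h1 : IsIndMatching (cutRel E A Aᶜ) M₁ := by
    constructor
    · rintro e he
      rw [hM₁, Finset.mem_filter] at he
      obtain ⟨hA, hAc, _⟩ := hM.1 e he.1
      exact ⟨hA, hAc, he.2⟩
    · intro e he f hf hef x hx y hy
      rw [hM₁, Finset.mem_filter] at he hf
      obtain ⟨hxy, hnD⟩ := hM.2 e he.1 f hf.1 hef x hx y hy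
      refine ⟨hxy, ?_⟩
      rintro ⟨hxA, hyA, hE⟩
      exact hnD ⟨hxA, hyA, (SimpleGraph.fromRel_adj E x y).2 ⟨hxy, Or.inl hE⟩⟩
  -- M₂ is an induced matching in G[Aᶜ→A]
  have h2 : IsIndMatching (cutRel E Aᶜ A) M₂ := by
    constructor
    · rintro e' he'
      rw [hM₂, Finset.mem_image] at he'
      obtain ⟨e, he, rfl⟩ := he'
      rw [Finset.mem_filter] at he
      obtain ⟨hA, hAc, hadj⟩ := hM.1 e he.1
      rw [SimpleGraph.fromRel_adj] at hadj
      have hE : E e.2 e.1 := hadj.2.resolve_left he.2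
      exact ⟨hAc, hA, hE⟩
    · intro e' he' f' hf' hef' x hx y hy
      rw [hM₂, Finset.mem_image] at he' hf'
      obtain ⟨e, he, rfl⟩ := he'
      obtain ⟨f, hf, rfl⟩ := hf'
      rw [Finset.mem_filter] at he hf
      have hef : e ≠ f := fun h => hef' (by rw [h])
      have hx' : x = e.1 ∨ x = e.2 := hx.symm
      have hy' : y = f.1 ∨ y = f.2 := hy.symm
      obtain ⟨hxy, _⟩ := hM.2 e he.1 f hf.1 hef x hx' y hy'
      obtain ⟨hyx, hnD⟩ := hM.2 f hf.1 e he.1 hef.symm y hy' x hx'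
      refine ⟨hxy, ?_⟩
      rintro ⟨hxAc, hyA, hE⟩
      exact hnD ⟨hyA, hxAc, (SimpleGraph.fromRel_adj E y x).2 ⟨hyx, Or.inr hE⟩⟩
  calc M.card = M₁.card + M₂.card := hcard.symm
    _ ≤ nu (cutRel E A Aᶜ) + nu (cutRel E Aᶜ A) :=
        Nat.add_le_add (card_le_nu h1) (card_le_nu h2)

lemma uwidth_le_width (bd : BranchDecomp V) (E : V → V → Prop) :
    bd.uwidth (SimpleGraph.fromRel E) ≤ bd.width E := by
  haveI := bd.finL
  haveI : Nonempty bd.L := by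
    have := bd.two_le
    exact (Nat.card_pos_iff.1 (by omega)).1
  obtain ⟨t₁⟩ := ‹Nonempty bd.L›
  have hne : (bd.T.neighborSet t₁).Nonempty := by
    rcases bd.subcubic t₁ with h | h <;>
      exact Set.nonempty_of_ncard_ne_zero (by omega)
  obtain ⟨t₂, ht₂⟩ := hne
  have hadj : bd.T.Adj t₁ t₂ := ht₂
  have hbdd : BddAbove {n | ∃ a b, bd.T.Adj a b ∧ n = bimimCut E (bd.side a b)} := by
    refine ⟨2 * Fintype.card (V × V), ?_⟩
    rintro n ⟨a, b, -, rfl⟩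
    have := Nat.add_le_add (nu_le_card (cutRel E (bd.side a b) (bd.side a b)ᶜ))
      (nu_le_card (cutRel E (bd.side a b)ᶜ (bd.side a b)))
    unfold bimimCut
    omega
  refine csSup_le ⟨_, t₁, t₂, hadj, rfl⟩ ?_
  rintro n ⟨a, b, hab, rfl⟩
  calc mimCut (SimpleGraph.fromRel E) (bd.side a b) ≤ bimimCut E (bd.side a b) :=
        mimCut_le_bimimCut E _
    _ ≤ bd.width E := le_csSup hbdd ⟨a, b, hab, rfl⟩

end Aux

theorem stmt_2' {V : Type} [Fintype V] (E : V → V → Prop) (h2 : 2 ≤ Nat.card V) :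
    mimw (SimpleGraph.fromRel E) ≤ bimimw E ∧
      lmimw (SimpleGraph.fromRel E) ≤ lbimimw E := by
  constructor
  · rcases Set.eq_empty_or_nonempty {n | ∃ bd : BranchDecomp V, bd.width E = n} with h | h
    · have hm : {n | ∃ bd : BranchDecomp V, bd.uwidth (SimpleGraph.fromRel E) = n} = ∅ := by
        rw [Set.eq_empty_iff_forall_notMem] at h ⊢
        rintro n ⟨bd, -⟩
        exact h (bd.width E) ⟨bd, rfl⟩
      rw [bimimw, mimw, h, hm]
    · obtain ⟨bd, hbd⟩ := Nat.sInf_mem h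
      rw [bimimw, ← hbd]
      exact le_trans (Nat.sInf_le ⟨bd, rfl⟩) (uwidth_le_width bd E)
  · rcases Set.eq_empty_or_nonempty
        {n | ∃ bd : BranchDecomp V, IsCaterpillar bd.T ∧ bd.width E = n} with h | h
    · have hm : {n | ∃ bd : BranchDecomp V,
          IsCaterpillar bd.T ∧ bd.uwidth (SimpleGraph.fromRel E) = n} = ∅ := by
        rw [Set.eq_empty_iff_forall_notMem] at h ⊢
        rintro n ⟨bd, hc, -⟩
        exact h (bd.width E) ⟨bd, hc, rfl⟩
      rw [lbimimw, lmimw, h, hm]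
    · obtain ⟨bd, hc, hbd⟩ := Nat.sInf_mem h
      rw [lbimimw, ← hbd]
      exact le_trans (Nat.sInf_le ⟨bd, hc, rfl⟩) (uwidth_le_width bd E)

theorem stmt_2 {V : Type} [Fintype V] (E : V → V → Prop) (h2 : 2 ≤ Nat.card V) :
    mimw (SimpleGraph.fromRel E) ≤ bimimw E ∧
      lmimw (SimpleGraph.fromRel E) ≤ lbimimw E := by
  exact stmt_2' E h2
end

section
/- Let G be a digraph, let r be a positive integer, and let (A, B) be a partition of V(G). Then ν(G^r[A→B]) ≤ rank₂(M_G[A→B]), where rank₂ denotes rank over the two-element field GF(2). -/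
open scoped Classical

/-- The `r`-th power of a digraph: there is an edge `(x, y)` whenever there is a
directed path of length at least 1 and at most `r` from `x` to `y`. -/
def dipower {V : Type} (E : V → V → Prop) (r : ℕ) : V → V → Prop :=
  fun x y => ∃ (k : ℕ) (p : Fin (k + 1) → V), 1 ≤ k ∧ k ≤ r ∧
    Function.Injective p ∧ (∀ i : Fin k, E (p i.castSucc) (p i.succ)) ∧
    p 0 = x ∧ p (Fin.last k) = y
/-- The matrix `M_G[A→B]` over GF(2): rows indexed by `B`, columns indexed by `A`,
with entry `(b, a)` equal to 1 iff `(a, b)` is an edge. -/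
noncomputable def cutMatrix {V : Type} (E : V → V → Prop) (A B : Set V) :
    Matrix B A (ZMod 2) :=
  Matrix.of fun (b : B) (a : A) => if E a.1 b.1 then 1 else 0


section walks
variable {V : Type} {E : V → V → Prop}

/-- A walk (not necessarily injective) of length `k` from `x` to `y`. -/
def NWalk (E : V → V → Prop) (x y : V) (k : ℕ) : Prop :=
  ∃ p : ℕ → V, (∀ i < k, E (p i) (p (i + 1))) ∧ p 0 = x ∧ p k = y

/-- An injective path of length `k` from `x` to `y`, indexed by `ℕ`. -/
def NPath (E : V → V → Prop) (x y : V) (k : ℕ) : Prop :=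
  ∃ p : ℕ → V, (∀ i < k, E (p i) (p (i + 1))) ∧ p 0 = x ∧ p k = y ∧
    ∀ i ≤ k, ∀ j ≤ k, p i = p j → i = j

lemma nwalk_concat {x y z : V} {k l : ℕ} (h1 : NWalk E x y k) (h2 : NWalk E y z l) :
    NWalk E x z (k + l) := by
  obtain ⟨p, hp, hp0, hpk⟩ := h1
  obtain ⟨q, hq, hq0, hql⟩ := h2
  refine ⟨fun m => if m ≤ k then p m else q (m - k), ?_, by simp [hp0], ?_⟩
  · intro m hm
    by_cases h1 : m + 1 ≤ k
    · simp only [if_pos (by omega : m ≤ k), if_pos h1]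
      exact hp m (by omega)
    · by_cases h2' : m ≤ k
      · have hmk : m = k := by omega
        subst hmk
        simp only [if_pos le_rfl, if_neg h1]
        have : m + 1 - m = 1 := by omega
        rw [this, hpk, ← hq0]
        exact hq 0 (by omega)
      · simp only [if_neg h2', if_neg (by omega : ¬ m + 1 ≤ k)]
        have : m + 1 - k = (m - k) + 1 := by omega
        rw [this]
        exact hq (m - k) (by omega)
  · by_cases h : k + l ≤ k
    · have hl : l = 0 := by omega
      simp only [if_pos h]
      have : k + l = k := by omega
      rw [this, hpk, ← hq0, ← hql, hl]
    · simp only [if_neg h]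
      have : k + l - k = l := by omega
      rw [this, hql]

lemma nwalk_single {x y : V} (h : E x y) : NWalk E x y 1 :=
  ⟨fun m => if m = 0 then x else y, by intro i hi; simp [Nat.lt_one_iff.mp hi, h], by simp, by simp⟩

lemma nwalk_segment {p : ℕ → V} {k s t : ℕ} (hp : ∀ i < k, E (p i) (p (i + 1)))
    (hst : s ≤ t) (htk : t ≤ k) : NWalk E (p s) (p t) (t - s) := by
  refine ⟨fun m => p (s + m), ?_, by simp, ?_⟩
  · intro i hi
    show E (p (s + i)) (p (s + (i + 1)))
    have h4 : s + (i + 1) = (s + i) + 1 := by omega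
    rw [h4]
    exact hp (s + i) (by omega)
  · show p (s + (t - s)) = p t
    congr 1
    omega

lemma exists_npath_of_nwalk {x y : V} (hxy : x ≠ y) :
    ∀ k, NWalk E x y k → ∃ k', 1 ≤ k' ∧ k' ≤ k ∧ NPath E x y k' := by
  intro k
  induction k using Nat.strong_induction_on with
  | _ k IH =>
    rintro ⟨p, hedge, h0, hk⟩
    by_cases hinj : ∀ i ≤ k, ∀ j ≤ k, p i = p j → i = j
    · have hk1 : 1 ≤ k := by
        rcases Nat.eq_zero_or_pos k with h | h
        · exfalso; apply hxy; rw [← h0, ← hk, h]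
        · exact h
      exact ⟨k, hk1, le_rfl, p, hedge, h0, hk, hinj⟩
    · push_neg at hinj
      obtain ⟨i, hi, j, hj, hpij, hij⟩ := hinj
      -- wlog i < j
      obtain ⟨a, b, hab, ha, hb, hpab⟩ : ∃ a b, a < b ∧ a ≤ k ∧ b ≤ k ∧ p a = p b := by
        rcases lt_or_gt_of_ne hij with h | h
        · exact ⟨i, j, h, hi, hj, hpij⟩
        · exact ⟨j, i, h, hj, hi, hpij.symm⟩
      set k' := k - (b - a) with hk'
      have hk'lt : k' < k := by omega
      have hwalk : NWalk E x y k' := by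
        refine ⟨fun m => if m ≤ a then p m else p (m + (b - a)), ?_, by simp [h0], ?_⟩
        · intro m hm
          by_cases h1 : m + 1 ≤ a
          · simp only [if_pos (by omega : m ≤ a), if_pos h1]
            exact hedge m (by omega)
          · by_cases h2 : m ≤ a
            · have hma : m = a := by omega
              subst hma
              simp only [if_pos le_rfl, if_neg h1]
              rw [hpab]
              have h3 : m + 1 + (b - m) = b + 1 := by omega
              rw [h3]
              exact hedge b (by omega)
            · simp only [if_neg h2, if_neg (by omega : ¬ m + 1 ≤ a)]
              have h3 : m + 1 + (b - a) = (m + (b - a)) + 1 := by omega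
              rw [h3]
              exact hedge (m + (b - a)) (by omega)
        · by_cases h : k' ≤ a
          · have h1 : k' = a := by omega
            have h2 : b = k := by omega
            simp only [if_pos h]
            rw [h1, hpab, h2, hk]
          · simp only [if_neg h]
            have : k' + (b - a) = k := by omega
            rw [this, hk]
      obtain ⟨k'', h1, h2, h3⟩ := IH k' hk'lt hwalk
      exact ⟨k'', h1, by omega, h3⟩

lemma dipower_iff_npath {r : ℕ} {x y : V} :
    dipower E r x y ↔ ∃ k, 1 ≤ k ∧ k ≤ r ∧ NPath E x y k := by
  constructor
  · rintro ⟨k, p, h1, h2, hinj, hedge, h0, hl⟩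
    refine ⟨k, h1, h2, fun n => p ⟨min n k, by omega⟩, ?_, ?_, ?_, ?_⟩
    · intro i hik
      have e1 : (⟨min i k, by omega⟩ : Fin (k + 1)) = Fin.castSucc ⟨i, hik⟩ := by
        apply Fin.ext; simp; omega
      have e2 : (⟨min (i + 1) k, by omega⟩ : Fin (k + 1)) = Fin.succ ⟨i, hik⟩ := by
        apply Fin.ext; simp; omega
      show E (p ⟨min i k, by omega⟩) (p ⟨min (i + 1) k, by omega⟩)
      rw [e1, e2]; exact hedge ⟨i, hik⟩
    · show p ⟨min 0 k, by omega⟩ = x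
      have h5 : (⟨min 0 k, by omega⟩ : Fin (k + 1)) = 0 := by apply Fin.ext; simp
      rw [h5, h0]
    · show p ⟨min k k, by omega⟩ = y
      have h5 : (⟨min k k, by omega⟩ : Fin (k + 1)) = Fin.last k := by apply Fin.ext; simp
      rw [h5, hl]
    · intro i hik j hjk hpij
      have := hinj hpij
      have := congrArg Fin.val this
      simp at this
      omega
  · rintro ⟨k, h1, h2, p, hedge, h0, hk, hinj⟩
    refine ⟨k, fun i => p i.1, h1, h2, ?_, ?_, ?_, ?_⟩
    · intro i j hij
      apply Fin.ext
      exact hinj i.1 (by omega) j.1 (by omega) hij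
    · intro i
      simpa using hedge i.1 i.2
    · simpa using h0
    · simpa using hk

lemma dipower_of_nwalk {r L : ℕ} {x y : V} (hxy : x ≠ y) (hw : NWalk E x y L)
    (hLr : L ≤ r) : dipower E r x y := by
  obtain ⟨k', h1, h2, h3⟩ := exists_npath_of_nwalk hxy L hw
  exact dipower_iff_npath.mpr ⟨k', h1, h2.trans hLr, h3⟩

end walks

theorem stmt_4 {V : Type} [Fintype V] (E : V → V → Prop) (r : ℕ) (hr : 1 ≤ r)
    (A B : Set V) (hU : A ∪ B = Set.univ) (hI : A ∩ B = ∅) :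
    nu (cutRel (dipower E r) A B) ≤ (cutMatrix E A B).rank := by
  classical
  have hAorB : ∀ v : V, v ∈ A ∨ v ∈ B := by
    intro v
    have : v ∈ A ∪ B := by rw [hU]; trivial
    exact this
  have hAB : ∀ v : V, v ∈ A → v ∈ B → False := by
    intro v h1 h2
    have : v ∈ A ∩ B := ⟨h1, h2⟩
    rw [hI] at this
    exact this
  apply csSup_le
  · exact ⟨0, ∅, ⟨by simp, by simp⟩, rfl⟩
  rintro n ⟨M, hM, rfl⟩
  haveI : Fintype {e // e ∈ M} := FinsetCoe.fintype M
  have ha : ∀ e : {e // e ∈ M}, (e : V × V).1 ∈ A := fun e => (hM.1 e e.2).1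
  have hb : ∀ e : {e // e ∈ M}, (e : V × V).2 ∈ B := fun e => (hM.1 e e.2).2.1
  have hdip : ∀ e : {e // e ∈ M}, dipower E r (e : V × V).1 (e : V × V).2 :=
    fun e => (hM.1 e e.2).2.2
  have hsep : ∀ e f : {e // e ∈ M}, e ≠ f → (e : V × V).1 ≠ (f : V × V).2 ∧
      ¬ cutRel (dipower E r) A B (e : V × V).1 (f : V × V).2 := by
    intro e f hef
    exact hM.2 e e.2 f f.2 (fun h => hef (Subtype.ext h)) _ (Or.inl rfl) _ (Or.inr rfl)
  have hex : ∀ e : {e // e ∈ M}, ∃ k, 1 ≤ k ∧ NPath E (e : V × V).1 (e : V × V).2 k := by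
    intro e
    obtain ⟨k, h1, h2, hp⟩ := dipower_iff_npath.mp (hdip e)
    exact ⟨k, h1, hp⟩
  have hLdata : ∀ e : {e // e ∈ M}, ∃ l, (1 ≤ l ∧ NPath E (e : V × V).1 (e : V × V).2 l) ∧
      l ≤ r ∧ ∀ k < l, ¬ (1 ≤ k ∧ NPath E (e : V × V).1 (e : V × V).2 k) := by
    intro e
    refine ⟨Nat.find (hex e), Nat.find_spec (hex e), ?_, fun k hk => Nat.find_min (hex e) hk⟩
    obtain ⟨k, h1, h2, hp⟩ := dipower_iff_npath.mp (hdip e)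
    exact le_trans (Nat.find_le ⟨h1, hp⟩) h2
  choose L hLspec hLr hLmin using hLdata
  have hL1 : ∀ e, 1 ≤ L e := fun e => (hLspec e).1
  have hnp : ∀ e : {e // e ∈ M}, ∃ q : ℕ → V, (∀ i < L e, E (q i) (q (i + 1))) ∧
      q 0 = (e : V × V).1 ∧ q (L e) = (e : V × V).2 ∧
      ∀ i ≤ L e, ∀ j ≤ L e, q i = q j → i = j := fun e => (hLspec e).2
  choose p hpe hp0 hpl hpinj using hnp
  have htdata : ∀ e : {e // e ∈ M}, ∃ s, (s ≤ L e ∧ p e s ∈ B) ∧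
      ∀ k < s, ¬ (k ≤ L e ∧ p e k ∈ B) := by
    intro e
    have hexB : ∃ s, s ≤ L e ∧ p e s ∈ B := ⟨L e, le_rfl, by rw [hpl e]; exact hb e⟩
    exact ⟨Nat.find hexB, Nat.find_spec hexB, fun k hk => Nat.find_min hexB hk⟩
  choose t htspec htmin using htdata
  have ht1 : ∀ e, 1 ≤ t e := by
    intro e
    by_contra h
    have h0 : t e = 0 := by omega
    have h2 := (htspec e).2
    rw [h0, hp0 e] at h2
    exact hAB _ (ha e) h2
  have hprefA : ∀ e : {e // e ∈ M}, ∀ s, s < t e → p e s ∈ A := by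
    intro e s hs
    have hnot := htmin e s hs
    rcases hAorB (p e s) with h | h
    · exact h
    · exact absurd ⟨by have := (htspec e).1; omega, h⟩ hnot
  set v : {e // e ∈ M} → (↥B → ZMod 2) :=
    fun e b => ∑ s ∈ Finset.range (t e), (if E (p e s) b.1 then 1 else 0) with hv
  -- diagonal
  have hdiag : ∀ e : {e // e ∈ M}, v e ⟨p e (t e), (htspec e).2⟩ = 1 := by
    intro e
    rw [hv]
    show (∑ s ∈ Finset.range (t e), if E (p e s) (p e (t e)) then (1 : ZMod 2) else 0) = 1
    have hmem : t e - 1 ∈ Finset.range (t e) := Finset.mem_range.mpr (by have := ht1 e; omega)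
    rw [Finset.sum_eq_single_of_mem (t e - 1) hmem]
    · have hedge : E (p e (t e - 1)) (p e (t e)) := by
        have h := hpe e (t e - 1) (by have := ht1 e; have := (htspec e).1; omega)
        have h2 : t e - 1 + 1 = t e := by have := ht1 e; omega
        rwa [h2] at h
      simp [hedge]
    · intro s hs hsne
      rw [Finset.mem_range] at hs
      apply if_neg
      intro hE
      have hs1 : s + 1 < t e := by omega
      have hsL : s ≤ L e := by have := (htspec e).1; omega
      have w1 : NWalk E (p e 0) (p e s) (s - 0) := nwalk_segment (hpe e) (by omega) hsL
      have w2 : NWalk E (p e s) (p e (t e)) 1 := nwalk_single hE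
      have w3 : NWalk E (p e (t e)) (p e (L e)) (L e - t e) :=
        nwalk_segment (hpe e) (htspec e).1 le_rfl
      have w := nwalk_concat (nwalk_concat w1 w2) w3
      rw [hp0 e, hpl e] at w
      have hne : (e : V × V).1 ≠ (e : V × V).2 := fun h => hAB _ (ha e) (h ▸ hb e)
      obtain ⟨k', hk1, hk2, hk3⟩ := exists_npath_of_nwalk hne _ w
      exact hLmin e k' (by have := (htspec e).1; omega) ⟨hk1, hk3⟩
  -- cross terms
  have hcross : ∀ e f : {e // e ∈ M}, e ≠ f → L f - t f ≤ L e - t e →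
      v e ⟨p f (t f), (htspec f).2⟩ = 0 := by
    intro e f hef hg
    rw [hv]
    show (∑ s ∈ Finset.range (t e), if E (p e s) (p f (t f)) then (1 : ZMod 2) else 0) = 0
    apply Finset.sum_eq_zero
    intro s hs
    rw [Finset.mem_range] at hs
    apply if_neg
    intro hE
    have hsL : s ≤ L e := by have := (htspec e).1; omega
    have w1 : NWalk E (p e 0) (p e s) (s - 0) := nwalk_segment (hpe e) (by omega) hsL
    have w2 : NWalk E (p e s) (p f (t f)) 1 := nwalk_single hE
    have w3 : NWalk E (p f (t f)) (p f (L f)) (L f - t f) :=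
      nwalk_segment (hpe f) (htspec f).1 le_rfl
    have w := nwalk_concat (nwalk_concat w1 w2) w3
    rw [hp0 e, hpl f] at w
    obtain ⟨hne, hnD⟩ := hsep e f hef
    apply hnD
    refine ⟨ha e, hb f, ?_⟩
    apply dipower_of_nwalk hne w
    have h1 := (htspec e).1
    have h2 := hLr e
    omega
  -- membership in the range of the matrix
  have hmemrange : ∀ e : {e // e ∈ M},
      v e ∈ LinearMap.range (cutMatrix E A B).mulVecLin := by
    intro e
    refine ⟨∑ s ∈ (Finset.range (t e)).attach,
      Pi.single (⟨p e s.1, hprefA e s.1 (Finset.mem_range.mp s.2)⟩ : ↥A) 1, ?_⟩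
    rw [map_sum]
    funext b
    rw [Finset.sum_apply, hv]
    show _ = ∑ s ∈ Finset.range (t e), (if E (p e s) b.1 then (1 : ZMod 2) else 0)
    rw [← Finset.sum_attach (Finset.range (t e))
      (fun s => if E (p e s) b.1 then (1 : ZMod 2) else 0)]
    apply Finset.sum_congr rfl
    intro s _
    rw [Matrix.mulVecLin_apply, Matrix.mulVec_single]
    show cutMatrix E A B b _ * 1 = _
    rw [mul_one]
    rfl
  -- linear independence
  have hli : LinearIndependent (ZMod 2) v := by
    rw [Fintype.linearIndependent_iff]
    intro g hg i0
    by_contra hi0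
    set S : Finset {e // e ∈ M} := Finset.univ.filter (fun i => g i ≠ 0) with hS
    have hSne : S.Nonempty := ⟨i0, by simp [hS, hi0]⟩
    obtain ⟨e0, he0S, he0min⟩ := Finset.exists_min_image S (fun e => L e - t e) hSne
    have hge0 : g e0 ≠ 0 := by simpa [hS] using he0S
    have heval := congrFun hg (⟨p e0 (t e0), (htspec e0).2⟩ : ↥B)
    rw [Finset.sum_apply, Pi.zero_apply] at heval
    rw [Finset.sum_eq_single e0] at heval
    · rw [Pi.smul_apply, smul_eq_mul, hdiag e0, mul_one] at heval
      exact hge0 heval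
    · intro i _ hine
      by_cases hgi : g i = 0
      · simp [hgi]
      · have hiS : i ∈ S := by simp [hS, hgi]
        have h0 : v i ⟨p e0 (t e0), (htspec e0).2⟩ = 0 := hcross i e0 hine (he0min i hiS)
        rw [Pi.smul_apply, smul_eq_mul, h0, mul_zero]
    · intro h
      exact absurd (Finset.mem_univ e0) h
  -- conclude
  let w : {e // e ∈ M} → ↥(LinearMap.range (cutMatrix E A B).mulVecLin) :=
    fun e => ⟨v e, hmemrange e⟩
  have hliw : LinearIndependent (ZMod 2) w := by
    apply LinearIndependent.of_comp (Submodule.subtype _)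
    convert hli <;> rfl
  have hcard := hliw.fintype_card_le_finrank
  rw [Fintype.card_coe] at hcard
  exact hcard
end

section
/- Let r and w be positive integers and let G be a digraph. If (T, δ) is a branch decomposition of G of bi-rank-width at most w, then (T, δ), regarded as a branch decomposition of G^r, has bi-mim-width at most w. -/
open scoped Classical

/-- `bicutrk_G(A) = rank₂(M_G[A→Ā]) + rank₂(M_G[Ā→A])`. -/
noncomputable def bicutrk {V : Type} [Fintype V] (E : V → V → Prop) (A : Set V) : ℕ :=
  (cutMatrix E A Aᶜ).rank + (cutMatrix E Aᶜ A).rank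

/-- The bi-rank-width of a branch decomposition with respect to a digraph. -/
noncomputable def birwidth {V : Type} [Fintype V] (bd : BranchDecomp V)
    (E : V → V → Prop) : ℕ :=
  sSup {n | ∃ t₁ t₂, bd.T.Adj t₁ t₂ ∧ n = bicutrk E (bd.side t₁ t₂)}

section Aux
variable {V : Type}

lemma dedup_chain (E : V → V → Prop) :
    ∀ (n : ℕ) (L : List V), L.length ≤ n → L.Chain' E → ∃ L' : List V, L'.Nodup ∧ L'.Chain' E ∧
      L'.head? = L.head? ∧ L'.getLast? = L.getLast? ∧ L'.length ≤ L.length ∧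
      ∀ x ∈ L', x ∈ L := by
  intro n
  induction n with
  | zero =>
    intro L hL _
    have : L = [] := by simpa using hL
    subst this
    exact ⟨[], by simp, List.isChain_nil, rfl, rfl, le_rfl, by simp⟩
  | succ n ih =>
    intro L hL hC
    match L with
    | [] => exact ⟨[], by simp, List.isChain_nil, rfl, rfl, le_rfl, by simp⟩
    | x :: xs =>
      by_cases hx : x ∈ xs
      · obtain ⟨s, t, rfl⟩ := List.append_of_mem hx
        have hsplit : List.Chain' E ((x :: s) ++ x :: t) := hC
        have hC2 : List.Chain' E (x :: t) := (List.isChain_split.mp hsplit).2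
        have hlen : (x :: t).length ≤ n := by
          simp at hL ⊢; omega
        obtain ⟨L', h1, h2, h3, h4, h5, h6⟩ := ih (x :: t) hlen hC2
        refine ⟨L', h1, h2, ?_, ?_, ?_, ?_⟩
        · simpa using h3
        · rw [h4]
          have heq : x :: (s ++ x :: t) = (x :: s) ++ (x :: t) := by simp
          obtain ⟨w, hw⟩ : ∃ w, (x :: t).getLast? = some w := by
            have : (x :: t).getLast? ≠ none := by
              simp [List.getLast?_eq_none_iff]
            exact Option.ne_none_iff_exists'.mp this
          rw [heq, List.getLast?_append, hw]
          simp
        · simp at h5 ⊢; omega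
        · intro y hy
          have := h6 y hy
          simp at this ⊢; tauto
      · match xs with
        | [] => exact ⟨[x], by simp, List.isChain_singleton x, rfl, rfl, le_rfl, by simp⟩
        | z :: zs =>
          have hC2 : List.Chain' E (z :: zs) := hC.tail
          have hlen : (z :: zs).length ≤ n := by simp at hL ⊢; omega
          obtain ⟨L', h1, h2, h3, h4, h5, h6⟩ := ih (z :: zs) hlen hC2
          have hxz : E x z := (List.isChain_cons_cons.mp hC).1
          have hL'ne : L' ≠ [] := by
            intro h; rw [h] at h3; simp at h3
          refine ⟨x :: L', ?_, ?_, by simp, ?_, by simp at h5 ⊢; omega, ?_⟩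
          · refine List.nodup_cons.mpr ⟨fun hmem => hx ?_, h1⟩
            exact h6 x hmem
          · refine List.isChain_cons.mpr ⟨?_, h2⟩
            intro y hy
            rw [h3] at hy
            simp at hy
            exact hy ▸ hxz
          · match L', hL'ne with
            | z' :: zs', _ =>
              rw [List.getLast?_cons_cons, List.getLast?_cons_cons]
              exact h4
          · intro y hy
            simp at hy ⊢
            rcases hy with rfl | hy
            · left; rfl
            · have := h6 y hy; simp at this; tauto

lemma dipower_of_list (E : V → V → Prop) (r : ℕ) (u v : V) (huv : u ≠ v) (L : List V)
    (hC : L.Chain' E) (hh : L.head? = some u) (hl : L.getLast? = some v)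
    (hlen : L.length ≤ r + 1) : dipower E r u v := by
  obtain ⟨L', hnd, hC', hh', hl', hlen', -⟩ := dedup_chain E L.length L le_rfl hC
  rw [hh] at hh'; rw [hl] at hl'
  have hne : L' ≠ [] := by rintro rfl; simp at hh'
  obtain ⟨k, hk⟩ : ∃ k, L'.length = k + 1 := ⟨L'.length - 1, by
    have := List.length_pos_iff.mpr hne; omega⟩
  have hk1 : 1 ≤ k := by
    rcases Nat.eq_zero_or_pos k with rfl | h
    · exfalso
      match L', hne, hk with
      | [a], _, _ =>
        simp at hh' hl'
        exact huv (hh'.symm.trans hl')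
    · exact h
  refine ⟨k, fun i => L'.get (Fin.cast hk.symm i), hk1, by omega, ?_, ?_, ?_, ?_⟩
  · intro a b hab
    have := List.nodup_iff_injective_get.mp hnd hab
    simpa [Fin.ext_iff] using this
  · intro i
    have := List.isChain_iff_getElem.mp hC' i (by omega)
    convert this using 2 <;> simp [Fin.ext_iff]
  · have : L'.head? = some (L'.get ⟨0, by omega⟩) := by
      rw [List.head?_eq_getElem?]
      simp [List.getElem?_eq_getElem (by omega : 0 < L'.length)]
    rw [this] at hh'
    simpa using hh'
  · have h9 : L'[k]? = some v := by
      rw [← hl', List.getLast?_eq_getElem?, hk]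
      simp
    rw [List.getElem?_eq_getElem (by omega : k < L'.length)] at h9
    simp only [Option.some_inj] at h9
    show L'.get _ = v
    rw [List.get_eq_getElem]
    simpa using h9

lemma list_of_dipower (E : V → V → Prop) (r : ℕ) (u v : V) (h : dipower E r u v) :
    u ≠ v ∧ ∃ L : List V, L.Chain' E ∧ L.head? = some u ∧
      L.getLast? = some v ∧ 2 ≤ L.length ∧ L.length ≤ r + 1 := by
  obtain ⟨k, p, hk1, hkr, hinj, hE, hp0, hpl⟩ := h
  refine ⟨?_, List.ofFn p, ?_, ?_, ?_, by simp; omega, by simp; omega⟩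
  · rintro rfl
    have := hinj (hp0.trans hpl.symm)
    simp [Fin.ext_iff] at this
    omega
  · refine List.isChain_iff_getElem.mpr ?_
    intro i hi
    simp only [List.length_ofFn] at hi
    rw [List.getElem_ofFn, List.getElem_ofFn]
    have := hE ⟨i, by omega⟩
    convert this using 2 <;> simp [Fin.ext_iff]
  · have : (List.ofFn p).head? = some ((List.ofFn p).get ⟨0, by simp⟩) := by
      rw [List.head?_eq_getElem?]
      simp [List.getElem?_eq_getElem]
    rw [this, List.get_ofFn]
    simpa using congrArg some hp0
  · have hne : List.ofFn p ≠ [] := by simp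
    rw [List.getLast?_eq_getLast hne, List.getLast_ofFn]
    rw [← hpl]
    congr 1 <;> simp [Fin.ext_iff]

lemma rank_submatrix_le' {m n p q : Type} [Fintype m] [Fintype n] [Fintype p] [Fintype q]
    {K : Type} [Field K] (A : Matrix m n K) (f : p → m) (g : q → n) :
    (A.submatrix f g).rank ≤ A.rank := by
  have hEq : A.submatrix f g =
      (Matrix.of fun i a => if f i = a then (1 : K) else 0) * A *
        (Matrix.of fun b j => if b = g j then (1 : K) else 0) := by
    ext i j
    simp [Matrix.mul_apply, Finset.sum_ite_eq, Finset.sum_ite_eq']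
  rw [hEq]
  exact le_trans (Matrix.rank_mul_le_left _ _) (Matrix.rank_mul_le_right _ _)

lemma card_le_rank_of_matching [Fintype V] (E : V → V → Prop) (r : ℕ) (A B : Set V)
    (hB : B = Aᶜ) (M : Finset (V × V)) (hM : IsIndMatching (cutRel (dipower E r) A B) M) :
    M.card ≤ (cutMatrix E A B).rank := by
  -- decompose each matching edge's path at the first exit from A
  have hdec : ∀ i : {e // e ∈ M}, ∃ (P Q : List V) (α β : V),
      P.Chain' E ∧ Q.Chain' E ∧ P.head? = some i.1.1 ∧ Q.getLast? = some i.1.2 ∧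
      P.getLast? = some α ∧ Q.head? = some β ∧ α ∈ A ∧ β ∈ B ∧ E α β ∧
      P.length + Q.length ≤ r + 1 := by
    rintro ⟨⟨a, b⟩, hab⟩
    obtain ⟨ha, hb, hd⟩ := hM.1 _ hab
    obtain ⟨-, L, hC, hh, hl, -, hlen⟩ := list_of_dipower E r a b hd
    simp only at *
    set P := L.takeWhile (fun x => decide (x ∈ A)) with hP
    set Q := L.dropWhile (fun x => decide (x ∈ A)) with hQ
    have hPQ : P ++ Q = L := List.takeWhile_append_dropWhile
    have hLne : L ≠ [] := by rintro rfl; simp at hh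
    obtain ⟨c, tl, rfl⟩ := List.exists_cons_of_ne_nil hLne
    have hca : c = a := by simpa using hh
    subst hca
    have hPcons : P = c :: tl.takeWhile (fun x => decide (x ∈ A)) :=
      List.takeWhile_cons_of_pos (by simpa using ha)
    have hPne : P ≠ [] := by rw [hPcons]; simp
    have hQne : Q ≠ [] := by
      intro hq
      have hPL : P = c :: tl := by
        rw [← hPQ, hq, List.append_nil]
      have hbL : b ∈ P := by
        rw [hPL]
        have : (c :: tl).getLast? = some b := hl
        have := List.getLast?_eq_getLast (l := c :: tl) (by simp) ▸ this
        simp only [Option.some_inj] at this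
        rw [← this]
        exact List.getLast_mem _
      have := List.mem_takeWhile_imp hbL
      simp at this
      rw [hB] at hb
      exact hb this
    refine ⟨P, Q, P.getLast hPne, Q.head hQne, ?_, ?_, ?_, ?_, ?_, ?_, ?_, ?_, ?_, ?_⟩
    · exact (List.isChain_append.mp (hPQ ▸ hC)).1
    · exact (List.isChain_append.mp (hPQ ▸ hC)).2.1
    · rw [hPcons]; rfl
    · have h0 : (P ++ Q).getLast? = some b := hPQ ▸ hl
      rw [List.getLast?_append, List.getLast?_eq_getLast hQne] at h0
      have h1 : Q.getLast hQne = b := by simpa using h0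
      rw [List.getLast?_eq_getLast hQne, h1]
    · exact List.getLast?_eq_getLast hPne
    · exact List.head?_eq_head hQne
    · have := List.mem_takeWhile_imp (List.getLast_mem hPne)
      simpa using this
    · have := List.head_dropWhile_not (fun x => decide (x ∈ A)) (l := c :: tl) hQne
      simp at this
      rw [hB]; exact this
    · have := (List.isChain_append.mp (hPQ ▸ hC)).2.2
      exact this _ (List.getLast?_eq_getLast hPne) _ (List.head?_eq_head hQne)
    · have hlen2 : P.length + Q.length = (c :: tl).length := by
        rw [← hPQ, List.length_append]
      omega
  choose P Q α β hPC hQC hPh hQl hPl hQh hαA hβB hαβ hlen using hdec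
  have hmem : ∀ i : {e // e ∈ M}, i.1.1 ∈ A ∧ i.1.2 ∈ B :=
    fun i => ⟨(hM.1 _ i.2).1, (hM.1 _ i.2).2.1⟩
  have key : ∀ i j : {e // e ∈ M}, i ≠ j → E (α j) (β i) →
      (P j).length ≤ (P i).length → False := by
    intro i j hij hE hle
    have hne : j.1.1 ≠ i.1.2 := by
      intro h
      have h1 := (hmem j).1
      have h2 := (hmem i).2
      rw [hB] at h2
      rw [h] at h1
      exact h2 h1
    have hchain : (P j ++ Q i).Chain' E := by
      refine List.isChain_append.mpr ⟨hPC j, hQC i, ?_⟩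
      intro x hx y hy
      rw [hPl j] at hx
      rw [hQh i] at hy
      simp only [Option.mem_some_iff] at hx hy
      subst hx; subst hy
      exact hE
    have hhead : (P j ++ Q i).head? = some j.1.1 := by
      rw [List.head?_append, hPh j]
      rfl
    have hlast : (P j ++ Q i).getLast? = some i.1.2 := by
      rw [List.getLast?_append, hQl i]
      rfl
    have hlen2 : (P j ++ Q i).length ≤ r + 1 := by
      rw [List.length_append]
      have := hlen i
      omega
    have hd : dipower E r j.1.1 i.1.2 :=
      dipower_of_list E r _ _ hne _ hchain hhead hlast hlen2
    have hcut : cutRel (dipower E r) A B j.1.1 i.1.2 := ⟨(hmem j).1, (hmem i).2, hd⟩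
    have hef : j.1 ≠ i.1 := fun h => hij (Subtype.ext h).symm
    exact (hM.2 j.1 j.2 i.1 i.2 hef j.1.1 (Or.inl rfl) i.1.2 (Or.inr rfl)).2 hcut
  let ι := {e // e ∈ M}
  let N : Matrix ι ι (ZMod 2) := Matrix.of fun i j => if E (α j) (β i) then 1 else 0
  have hBT : N.BlockTriangular (fun i => (P i).length) := by
    intro i j hlt
    by_cases hij : i = j
    · exact absurd (hij ▸ hlt) (lt_irrefl _)
    · show (if E (α j) (β i) then (1 : ZMod 2) else 0) = 0
      rw [if_neg]
      intro hE
      exact key i j hij hE (le_of_lt hlt)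
  have hdet : N.det = 1 := by
    rw [hBT.det]
    refine Finset.prod_eq_one ?_
    intro a _
    have hblock : N.toSquareBlock (fun i => (P i).length) a = 1 := by
      ext i j
      by_cases hij : i = j
      · subst hij
        simp [Matrix.toSquareBlock_def, Matrix.one_apply, N, hαβ]
      · have hne2 : (i : ι) ≠ (j : ι) := fun h => hij (Subtype.ext h)
        have h0 : ¬ E (α (j : ι)) (β (i : ι)) := by
          intro hE
          exact key (i : ι) (j : ι) hne2 hE (le_of_eq (j.2.trans i.2.symm))
        simp [Matrix.toSquareBlock_def, Matrix.one_apply, N, h0, hij]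
    rw [hblock, Matrix.det_one]
  have hrank : N.rank = Fintype.card ι :=
    Matrix.rank_of_isUnit N ((Matrix.isUnit_iff_isUnit_det N).mpr (by rw [hdet]; exact isUnit_one))
  have hsub : N = (cutMatrix E A B).submatrix
      (fun i : ι => (⟨β i, hβB i⟩ : B)) (fun j : ι => (⟨α j, hαA j⟩ : A)) := by
    ext i j
    rfl
  calc M.card = Fintype.card ι := (Fintype.card_coe M).symm
    _ = N.rank := hrank.symm
    _ ≤ (cutMatrix E A B).rank := by
        rw [hsub]
        exact rank_submatrix_le' _ _ _

lemma nu_le_rank_aux {V : Type} [Fintype V] (E : V → V → Prop) (r : ℕ) (A B : Set V)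
    (hB : B = Aᶜ) : nu (cutRel (dipower E r) A B) ≤ (cutMatrix E A B).rank := by
  apply csSup_le'
  rintro n ⟨M, hM, rfl⟩
  exact card_le_rank_of_matching E r A B hB M hM

end Aux

theorem stmt_5 {V : Type} [Fintype V] (E : V → V → Prop) (r w : ℕ)
    (hr : 1 ≤ r) (hw : 1 ≤ w) (bd : BranchDecomp V) (h : birwidth bd E ≤ w) :
    bd.width (dipower E r) ≤ w := by
  apply csSup_le'
  rintro n ⟨t₁, t₂, hadj, rfl⟩
  set A := bd.side t₁ t₂ with hA
  have h1 : bimimCut (dipower E r) A ≤ bicutrk E A := by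
    have a1 := nu_le_rank_aux E r A Aᶜ rfl
    have a2 := nu_le_rank_aux E r Aᶜ A (compl_compl A).symm
    have a2' : nu (cutRel (dipower E r) Aᶜ A) ≤ (cutMatrix E Aᶜ A).rank := by
      refine le_trans a2 (le_of_eq ?_)
      congr!
    exact add_le_add a1 a2'
  have h2 : bicutrk E A ≤ birwidth bd E := by
    apply le_csSup
    · refine ⟨2 * Fintype.card V, ?_⟩
      rintro m ⟨s₁, s₂, -, rfl⟩
      have ha := Matrix.rank_le_card_width (cutMatrix E (bd.side s₁ s₂) (bd.side s₁ s₂)ᶜ)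
      have hb := Matrix.rank_le_card_width (cutMatrix E (bd.side s₁ s₂)ᶜ (bd.side s₁ s₂))
      have hc : Fintype.card ↥(bd.side s₁ s₂) ≤ Fintype.card V :=
        Fintype.card_le_of_injective Subtype.val Subtype.val_injective
      have hd : Fintype.card ↥(bd.side s₁ s₂)ᶜ ≤ Fintype.card V :=
        Fintype.card_le_of_injective Subtype.val Subtype.val_injective
      unfold bicutrk
      omega
    · exact ⟨t₁, t₂, hadj, rfl⟩
  exact h1.trans (h2.trans h)
end

section
/- Let G be a digraph, let r be a positive integer, and let (A, B) be a partition of V(G). Then ν(G^r[A→B]) ≤ r · ν(G[A→B]). -/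
open scoped Classical

namespace Stmt6

variable {V : Type}

def Walk (E : V → V → Prop) : ℕ → V → V → Prop
  | 0, x, y => x = y
  | (n+1), x, y => ∃ z, E x z ∧ Walk E n z y

lemma Walk.append {E : V → V → Prop} :
    ∀ {m n : ℕ} {x y z : V}, Walk E m x y → Walk E n y z → Walk E (m + n) x z := by
  intro m
  induction m with
  | zero => intro n x y z h h'; cases h; rw [Nat.zero_add]; exact h'
  | succ m ih =>
    intro n x y z h h'
    obtain ⟨w, hw, h⟩ := h
    have he : m + 1 + n = (m + n) + 1 := by omega
    rw [he]
    exact ⟨w, hw, ih h h'⟩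

lemma walk_seg {E : V → V → Prop} {k : ℕ} (q : ℕ → V)
    (hq : ∀ i, i < k → E (q i) (q (i+1))) :
    ∀ (j i : ℕ), i + j ≤ k → Walk E j (q i) (q (i + j)) := by
  intro j
  induction j with
  | zero => intro i _; rfl
  | succ j ih =>
    intro i hik
    refine ⟨q (i+1), hq i (by omega), ?_⟩
    have := ih (i+1) (by omega)
    have he : i + 1 + j = i + (j + 1) := by omega
    rwa [he] at this

lemma walk_toList {E : V → V → Prop} :
    ∀ {n : ℕ} {x y : V}, Walk E n x y →
      ∃ l : List V, List.Chain' E l ∧ l.length = n + 1 ∧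
        l.head? = some x ∧ l.getLast? = some y := by
  intro n
  induction n with
  | zero =>
    intro x y h; cases h
    exact ⟨[x], List.isChain_singleton x, by simp, by simp, by simp⟩
  | succ n ih =>
    intro x y h
    obtain ⟨z, hz, h⟩ := h
    obtain ⟨l, hc, hl, hh, hg⟩ := ih h
    refine ⟨x :: l, ?_, by simp [hl], by simp, ?_⟩
    · show List.IsChain E (x :: l); rw [List.isChain_cons]
      exact ⟨fun w hw => by rw [hh] at hw; cases hw; exact hz, hc⟩
    · have hne : l ≠ [] := by intro h'; simp [h'] at hl
      rw [List.getLast?_cons, hg]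
      rfl

lemma not_nodup_decomp : ∀ {l : List V}, ¬l.Nodup →
    ∃ (a : List V) (v : V) (b c : List V), l = a ++ v :: (b ++ v :: c) := by
  intro l
  induction l with
  | nil => intro h; exact absurd List.nodup_nil h
  | cons hd tl ih =>
    intro h
    by_cases hm : hd ∈ tl
    · obtain ⟨b, c, rfl⟩ := List.append_of_mem hm
      exact ⟨[], hd, b, c, rfl⟩
    · have : ¬tl.Nodup := fun hn => h (List.nodup_cons.2 ⟨hm, hn⟩)
      obtain ⟨a, v, b, c, rfl⟩ := ih this
      exact ⟨hd :: a, v, b, c, rfl⟩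

lemma chain'_shortcut {E : V → V → Prop} {a b c : List V} {v : V}
    (h : List.Chain' E (a ++ v :: (b ++ v :: c))) : List.Chain' E (a ++ v :: c) := by
  simp only [List.Chain'] at h ⊢
  rw [List.isChain_append] at h ⊢
  obtain ⟨h1, h2, h3⟩ := h
  refine ⟨h1, ?_, ?_⟩
  · have : (v :: b) ++ (v :: c) = v :: (b ++ v :: c) := by simp
    rw [← this, List.isChain_append] at h2
    exact h2.2.1
  · intro x hx y hy
    refine h3 x hx y ?_
    simpa using hy

lemma chain'_to_dipower {E : V → V → Prop} {r : ℕ} :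
    ∀ (n : ℕ) (l : List V), l.length ≤ n → List.Chain' E l →
      ∀ x y, l.head? = some x → l.getLast? = some y → x ≠ y → l.length ≤ r + 1 →
        dipower E r x y := by
  intro n
  induction n with
  | zero =>
    intro l hln _ x y hh _ _ _
    have : l = [] := List.length_eq_zero_iff.1 (Nat.le_zero.1 hln)
    subst this; simp at hh
  | succ n ih =>
    intro l hln hc x y hh hg hxy hlr
    by_cases hnd : l.Nodup
    · have hne : l ≠ [] := by rintro rfl; simp at hh
      have hlen2 : 2 ≤ l.length := by
        rcases l with _ | ⟨av, _ | ⟨bv, t⟩⟩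
        · simp at hh
        · simp only [List.head?_cons, Option.some.injEq] at hh
          simp only [List.getLast?_singleton, Option.some.injEq] at hg
          subst hh
          subst hg
          exact absurd rfl hxy
        · simp only [List.length_cons]; omega
      set k := l.length - 1 with hkdef
      have hk1 : 1 ≤ k := by omega
      have hkr : k ≤ r := by omega
      have hkl : k + 1 = l.length := by omega
      refine ⟨k, fun i : Fin (k+1) => l.get ⟨i.1, by omega⟩, hk1, hkr, ?_, ?_, ?_, ?_⟩
      · intro i j hij
        have h2 := List.nodup_iff_injective_get.1 hnd hij
        have h3 : (i : ℕ) = (j : ℕ) := by injection h2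
        exact Fin.ext h3
      · intro i
        have hi : i.1 < l.length - 1 := by have := i.2; omega
        exact List.isChain_iff_getElem.1 hc i.1 (by omega)
      · have : l.get ⟨0, by omega⟩ = x := by
          rcases l with _ | ⟨av, t⟩
          · simp at hh
          · simpa using hh
        simpa using this
      · have hgl : l.getLast hne = y := by
          rw [List.getLast?_eq_getLast_of_ne_nil hne] at hg
          exact Option.some.inj hg
        rw [← hgl, List.getLast_eq_getElem]
        simp [List.get_eq_getElem, hkdef]
    · obtain ⟨a, v, b, c, rfl⟩ := not_nodup_decomp hnd
      have hc' := chain'_shortcut hc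
      have hlen : (a ++ v :: c).length ≤ n := by
        simp only [List.length_append, List.length_cons] at hln ⊢
        omega
      have hh' : (a ++ v :: c).head? = some x := by
        simp only [List.head?_append, List.head?_cons] at hh ⊢
        exact hh
      have hg' : (a ++ v :: c).getLast? = some y := by
        have h1 : v :: (b ++ v :: c) = (v :: b) ++ (v :: c) := by simp
        rw [List.getLast?_append_cons, h1, List.getLast?_append_cons] at hg
        rw [List.getLast?_append_cons]
        exact hg
      have hlr' : (a ++ v :: c).length ≤ r + 1 := by
        simp only [List.length_append, List.length_cons] at hlr ⊢
        omega
      exact ih (a ++ v :: c) hlen hc' x y hh' hg' hxy hlr'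

lemma walk_to_dipower {E : V → V → Prop} {r n : ℕ} {x y : V}
    (h : Walk E n x y) (hn : n ≤ r) (hxy : x ≠ y) : dipower E r x y := by
  obtain ⟨l, hc, hl, hh, hg⟩ := walk_toList h
  exact chain'_to_dipower l.length l le_rfl hc x y hh hg hxy (by omega)

lemma isIndMatching_bddAbove [Fintype V] (D : V → V → Prop) :
    BddAbove {n | ∃ M : Finset (V × V), IsIndMatching D M ∧ M.card = n} := by
  refine ⟨Fintype.card (V × V), ?_⟩
  rintro n ⟨M, _, rfl⟩
  exact Finset.card_le_univ M

lemma le_nu [Fintype V] {D : V → V → Prop} {M : Finset (V × V)}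
    (h : IsIndMatching D M) : M.card ≤ nu D :=
  le_csSup (isIndMatching_bddAbove D) ⟨M, h, rfl⟩

lemma nu_spec [Fintype V] (D : V → V → Prop) :
    ∃ M : Finset (V × V), IsIndMatching D M ∧ M.card = nu D := by
  have hne : {n | ∃ M : Finset (V × V), IsIndMatching D M ∧ M.card = n}.Nonempty :=
    ⟨0, ∅, ⟨fun e he => absurd he (Finset.notMem_empty e),
      fun e he => absurd he (Finset.notMem_empty e)⟩, rfl⟩
  exact Nat.sSup_mem hne (isIndMatching_bddAbove D)

end Stmt6

theorem stmt_6 {V : Type} [Fintype V] (E : V → V → Prop) (r : ℕ) (hr : 1 ≤ r)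
    (A B : Set V) (hU : A ∪ B = Set.univ) (hI : A ∩ B = ∅) :
    nu (cutRel (dipower E r) A B) ≤ r * nu (cutRel E A B) := by
  classical
  obtain ⟨M, hM, hcard⟩ := Stmt6.nu_spec (cutRel (dipower E r) A B)
  rw [← hcard]
  have hAB : ∀ v : V, v ∈ A → v ∉ B := by
    intro v hA hB
    have : v ∈ A ∩ B := ⟨hA, hB⟩
    rw [hI] at this
    exact this
  have hBA : ∀ v : V, v ∉ B → v ∈ A := by
    intro v hv
    have : v ∈ A ∪ B := by rw [hU]; trivial
    rcases this with h | h
    · exact h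
    · exact absurd h hv
  have hdata : ∀ e : V × V, ∃ (d m : ℕ) (x y : V), e ∈ M →
      d + 1 + m ≤ r ∧ x ∈ A ∧ y ∈ B ∧ E x y ∧
        Stmt6.Walk E d e.1 x ∧ Stmt6.Walk E m y e.2 := by
    intro e
    by_cases he : e ∈ M
    · obtain ⟨heA, heB, k, p, hk1, hkr, hpinj, hedge, hp0, hpl⟩ := hM.1 e he
      set q : ℕ → V := fun n => if h : n < k + 1 then p ⟨n, h⟩ else p 0 with hqdef
      have hq : ∀ i, i < k → E (q i) (q (i+1)) := by
        intro i hi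
        have h1 : q i = p ((⟨i, hi⟩ : Fin k).castSucc) := by
          rw [hqdef]
          simp only [dif_pos (by omega : i < k + 1)]
          congr 1
        have h2 : q (i+1) = p ((⟨i, hi⟩ : Fin k).succ) := by
          rw [hqdef]
          simp only [dif_pos (by omega : i + 1 < k + 1)]
          congr 1
        rw [h1, h2]
        exact hedge ⟨i, hi⟩
      have hq0 : q 0 = e.1 := by
        rw [hqdef]
        simp only [dif_pos (by omega : 0 < k + 1)]
        rw [← hp0]
        congr 1
      have hqk : q k = e.2 := by
        rw [hqdef]
        simp only [dif_pos (by omega : k < k + 1)]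
        rw [← hpl]
        congr 1
      have hPk : ∃ j, q j ∈ B := ⟨k, by rw [hqk]; exact heB⟩
      set m0 := Nat.find hPk with hm0def
      have hm0B : q m0 ∈ B := Nat.find_spec hPk
      have hm0k : m0 ≤ k := Nat.find_le (by rw [hqk]; exact heB)
      have hm01 : 1 ≤ m0 := by
        by_contra h
        have h0 : m0 = 0 := by omega
        rw [h0, hq0] at hm0B
        exact hAB e.1 heA hm0B
      have hdB : q (m0 - 1) ∉ B := Nat.find_min hPk (by omega)
      have hdA : q (m0 - 1) ∈ A := hBA _ hdB
      refine ⟨m0 - 1, k - m0, q (m0 - 1), q m0, fun _ => ?_⟩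
      refine ⟨by omega, hdA, hm0B, ?_, ?_, ?_⟩
      · have := hq (m0 - 1) (by omega)
        have h2 : m0 - 1 + 1 = m0 := by omega
        rwa [h2] at this
      · have := Stmt6.walk_seg q hq (m0 - 1) 0 (by omega)
        rwa [Nat.zero_add, hq0] at this
      · have := Stmt6.walk_seg q hq (k - m0) m0 (by omega)
        have h2 : m0 + (k - m0) = k := by omega
        rwa [h2, hqk] at this
    · exact ⟨0, 0, e.1, e.1, fun h => absurd h he⟩
  choose d m x y hdata using hdata
  have noWalk : ∀ e ∈ M, ∀ f ∈ M, e ≠ f → ∀ n, n ≤ r → ¬Stmt6.Walk E n e.1 f.2 := by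
    intro e he f hf hef n hn hw
    have h2 := hM.2 e he f hf hef e.1 (Or.inl rfl) f.2 (Or.inr rfl)
    have h1A := (hM.1 e he).1
    have hfB := (hM.1 f hf).2.1
    exact h2.2 ⟨h1A, hfB, Stmt6.walk_to_dipower hw hn h2.1⟩
  have combo : ∀ e ∈ M, ∀ f ∈ M, e ≠ f → d e = d f →
      ∀ w, E (x e) w → Stmt6.Walk E (m f) w f.2 → False := by
    intro e he f hf hef hd w hEw hwf
    have h1 : Stmt6.Walk E (d e) e.1 (x e) := (hdata e he).2.2.2.2.1
    have h2 : Stmt6.Walk E 1 (x e) w := ⟨w, hEw, rfl⟩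
    have h3 := (h1.append h2).append hwf
    exact noWalk e he f hf hef _ (by have := (hdata f hf).1; omega) h3
  have hmaps : ∀ e ∈ M, d e ∈ Finset.range r := fun e he =>
    Finset.mem_range.2 (by have := (hdata e he).1; omega)
  have hfib := Finset.card_eq_sum_card_fiberwise hmaps
  have hsum2 : ∑ _i ∈ Finset.range r, M.card ≤
      ∑ j ∈ Finset.range r, r * {e ∈ M | d e = j}.card := by
    rw [← Finset.mul_sum, ← hfib, Finset.sum_const, Finset.card_range, smul_eq_mul]
  obtain ⟨i, hi, hle⟩ := Finset.exists_le_of_sum_le ⟨0, Finset.mem_range.2 (by omega)⟩ hsum2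
  set F := {e ∈ M | d e = i} with hFdef
  have hFM : ∀ e ∈ F, e ∈ M := fun e he => (Finset.mem_filter.1 he).1
  have hFd : ∀ e ∈ F, d e = i := fun e he => (Finset.mem_filter.1 he).2
  set M' := F.image (fun e => (x e, y e)) with hM'def
  have hinjOn : Set.InjOn (fun e => (x e, y e)) F := by
    intro e he f hf hxy2
    by_contra hef
    have hx : x e = x f := congrArg Prod.fst hxy2
    exact combo e (hFM e he) f (hFM f hf) hef
      ((hFd e he).trans (hFd f hf).symm)
      (y f) (by rw [hx]; exact (hdata f (hFM f hf)).2.2.2.1)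
      (hdata f (hFM f hf)).2.2.2.2.2
  have hcard' : M'.card = F.card := Finset.card_image_of_injOn hinjOn
  have hmatch : IsIndMatching (cutRel E A B) M' := by
    constructor
    · intro e' he'
      obtain ⟨e, he, rfl⟩ := Finset.mem_image.1 he'
      obtain ⟨_, hxA, hyB, hExy, _, _⟩ := hdata e (hFM e he)
      exact ⟨hxA, hyB, hExy⟩
    · intro e' he' f' hf' hne u hu w hw
      obtain ⟨e, he, rfl⟩ := Finset.mem_image.1 he'
      obtain ⟨f, hf, rfl⟩ := Finset.mem_image.1 hf'
      have hef : e ≠ f := by rintro rfl; exact hne rfl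
      have hdef : d e = d f := (hFd e he).trans (hFd f hf).symm
      obtain ⟨hsr_e, hxAe, hyBe, hEe, hwae, hwbe⟩ := hdata e (hFM e he)
      obtain ⟨hsr_f, hxAf, hyBf, hEf, hwaf, hwbf⟩ := hdata f (hFM f hf)
      rcases hu with rfl | rfl <;> rcases hw with rfl | rfl
      · constructor
        · intro h
          exact combo e (hFM e he) f (hFM f hf) hef hdef (y f)
            (by rw [show x e = x f from h]; exact hEf) hwbf
        · rintro ⟨_, hBf, _⟩
          exact hAB (x f) hxAf hBf
      · constructor
        · intro h
          apply hAB (x e) hxAe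
          rw [show x e = y f from h]
          exact hyBf
        · rintro ⟨_, _, hExy2⟩
          exact combo e (hFM e he) f (hFM f hf) hef hdef (y f) hExy2 hwbf
      · constructor
        · intro h
          apply hAB (x f) hxAf
          rw [← show y e = x f from h]
          exact hyBe
        · rintro ⟨hA', _, _⟩
          exact hAB (y e) hA' hyBe
      · constructor
        · intro h
          exact combo e (hFM e he) f (hFM f hf) hef hdef (y e) hEe
            (by rw [show y e = y f from h]; exact hwbf)
        · rintro ⟨hA', _, _⟩
          exact hAB (y e) hA' hyBe
  calc M.card ≤ r * F.card := hle
    _ ≤ r * nu (cutRel E A B) :=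
      Nat.mul_le_mul_left r (hcard' ▸ Stmt6.le_nu hmatch)
end

section
/- Let G be a reflexive interval digraph with at least two vertices, i.e., G has a representation {(S_v, T_v) : v ∈ V(G)} by pairs of nonempty closed real intervals with (v, w) ∈ E(G) ⇔ S_v ∩ T_w ≠ ∅ and S_v ∩ T_v ≠ ∅ for every v. Then lbimimw(G) ≤ 2. -/
open scoped Classical

section Aux

variable {V : Type}

lemma icc_between {I : Set ℝ} (hI : ∃ a b : ℝ, a ≤ b ∧ I = Set.Icc a b)
    {y z t : ℝ} (hy : y ∈ I) (hz : z ∈ I) (h1 : y ≤ t) (h2 : t ≤ z) : t ∈ I := by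
  obtain ⟨a, b, -, rfl⟩ := hI
  exact ⟨hy.1.trans h1, h2.trans hz.2⟩

lemma key_lemma {S T : V → Set ℝ}
    (hS : ∀ v, ∃ a b : ℝ, a ≤ b ∧ S v = Set.Icc a b)
    (hT : ∀ v, ∃ a b : ℝ, a ≤ b ∧ T v = Set.Icc a b)
    (p : V → ℝ) (hpS : ∀ v, p v ∈ S v) (hpT : ∀ v, p v ∈ T v)
    {u w u' w' : V} {θ : ℝ}
    (hu : p u ≤ θ) (hu' : p u' ≤ θ) (hw : θ ≤ p w) (hw' : θ ≤ p w')
    (e : (S u ∩ T w).Nonempty) (e' : (S u' ∩ T w').Nonempty) :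
    (S u ∩ T w').Nonempty ∨ (S u' ∩ T w).Nonempty := by
  obtain ⟨x, hxS, hxT⟩ := e
  obtain ⟨x', hxS', hxT'⟩ := e'
  rcases le_total x θ with h1 | h1
  · have hθw : θ ∈ T w := icc_between (hT w) hxT (hpT w) h1 hw
    rcases le_total x' θ with h2 | h2
    · have hru : max (p u) x ∈ S u :=
        by rcases max_choice (p u) x with h | h <;> rw [h] <;> first | exact hpS u | exact hxS
      have hru' : max (p u') x' ∈ S u' :=
        by rcases max_choice (p u') x' with h | h <;> rw [h] <;> first | exact hpS u' | exact hxS'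
      rcases le_total (max (p u) x) (max (p u') x') with h3 | h3
      · exact Or.inr ⟨max (p u') x', hru', icc_between (hT w) hxT (hpT w)
          ((le_max_right (p u) x).trans h3) ((max_le hu' h2).trans hw)⟩
      · exact Or.inl ⟨max (p u) x, hru, icc_between (hT w') hxT' (hpT w')
          ((le_max_right (p u') x').trans h3) ((max_le hu h1).trans hw')⟩
    · exact Or.inr ⟨θ, icc_between (hS u') (hpS u') hxS' hu' h2, hθw⟩
  · have hθu : θ ∈ S u := icc_between (hS u) (hpS u) hxS hu h1
    rcases le_total x' θ with h2 | h2
    · exact Or.inl ⟨θ, hθu, icc_between (hT w') hxT' (hpT w') h2 hw'⟩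
    · have hlw : min (p w) x ∈ T w :=
        by rcases min_choice (p w) x with h | h <;> rw [h] <;> first | exact hpT w | exact hxT
      have hlw' : min (p w') x' ∈ T w' :=
        by rcases min_choice (p w') x' with h | h <;> rw [h] <;> first | exact hpT w' | exact hxT'
      rcases le_total (min (p w) x) (min (p w') x') with h3 | h3
      · exact Or.inr ⟨min (p w) x, icc_between (hS u') (hpS u') hxS'
          (hu'.trans (le_min hw h1)) (h3.trans (min_le_right (p w') x')), hlw⟩
      · exact Or.inl ⟨min (p w') x', icc_between (hS u) (hpS u) hxS
          (hu.trans (le_min hw' h2)) (h3.trans (min_le_right (p w) x)), hlw'⟩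

lemma nu_le_one {D : V → V → Prop}
    (h : ∀ M : Finset (V × V), IsIndMatching D M → M.card ≤ 1) : nu D ≤ 1 := by
  apply csSup_le'
  rintro n ⟨M, hM, rfl⟩
  exact h M hM

lemma matching_two {D : V → V → Prop} {M : Finset (V × V)} (hM : IsIndMatching D M)
    (hc : ¬ M.card ≤ 1) :
    ∃ e f : V × V, D e.1 e.2 ∧ D f.1 f.2 ∧
      (∀ x, (x = e.1 ∨ x = e.2) → ∀ y, (y = f.1 ∨ y = f.2) → x ≠ y ∧ ¬D x y) ∧
      (∀ x, (x = f.1 ∨ x = f.2) → ∀ y, (y = e.1 ∨ y = e.2) → x ≠ y ∧ ¬D x y) := by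
  obtain ⟨e, he, f, hf, hef⟩ := Finset.one_lt_card.mp (lt_of_not_ge hc)
  exact ⟨e, f, hM.1 e he, hM.1 f hf, hM.2 e he f hf hef, hM.2 f hf e he (Ne.symm hef)⟩

lemma nu_cut_le_one_of_subsingleton_left (E' : V → V → Prop) {A : Set V} (B : Set V)
    (hA : A.Subsingleton) : nu (cutRel E' A B) ≤ 1 := by
  apply nu_le_one
  intro M hM
  by_contra hc
  obtain ⟨e, f, hDe, hDf, h1, -⟩ := matching_two hM hc
  exact (h1 e.1 (Or.inl rfl) f.1 (Or.inl rfl)).1 (hA hDe.1 hDf.1)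

lemma nu_cut_le_one_of_subsingleton_right (E' : V → V → Prop) (A : Set V) {B : Set V}
    (hB : B.Subsingleton) : nu (cutRel E' A B) ≤ 1 := by
  apply nu_le_one
  intro M hM
  by_contra hc
  obtain ⟨e, f, hDe, hDf, h1, -⟩ := matching_two hM hc
  exact (h1 e.2 (Or.inr rfl) f.2 (Or.inr rfl)).1 (hB hDe.2.1 hDf.2.1)

lemma bimim_le_two_subsingleton (E' : V → V → Prop) {A : Set V}
    (h : A.Subsingleton ∨ Aᶜ.Subsingleton) : bimimCut E' A ≤ 2 := by
  rcases h with h | h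
  · exact add_le_add (nu_cut_le_one_of_subsingleton_left E' _ h)
      (nu_cut_le_one_of_subsingleton_right E' _ h)
  · exact add_le_add (nu_cut_le_one_of_subsingleton_right E' _ h)
      (nu_cut_le_one_of_subsingleton_left E' _ h)

lemma nu_cut_le_one_mono {E : V → V → Prop} {S T : V → Set ℝ}
    (hS : ∀ v, ∃ a b : ℝ, a ≤ b ∧ S v = Set.Icc a b)
    (hT : ∀ v, ∃ a b : ℝ, a ≤ b ∧ T v = Set.Icc a b)
    (p : V → ℝ) (hpS : ∀ v, p v ∈ S v) (hpT : ∀ v, p v ∈ T v)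
    (hrep : ∀ v w, E v w ↔ (S v ∩ T w).Nonempty)
    {A B : Set V}
    (hAB : (∀ u ∈ A, ∀ w ∈ B, p u ≤ p w) ∨ (∀ u ∈ A, ∀ w ∈ B, p w ≤ p u)) :
    nu (cutRel E A B) ≤ 1 := by
  apply nu_le_one
  intro M hM
  by_contra hc
  obtain ⟨e, f, ⟨heA, heB, heE⟩, ⟨hfA, hfB, hfE⟩, h1, h2⟩ := matching_two hM hc
  rcases hAB with hm | hm
  · rcases key_lemma hS hT p hpS hpT (θ := max (p e.1) (p f.1))
      (le_max_left _ _) (le_max_right _ _)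
      (max_le (hm _ heA _ heB) (hm _ hfA _ heB))
      (max_le (hm _ heA _ hfB) (hm _ hfA _ hfB))
      ((hrep _ _).mp heE) ((hrep _ _).mp hfE) with hcr | hcr
    · exact (h1 e.1 (Or.inl rfl) f.2 (Or.inr rfl)).2 ⟨heA, hfB, (hrep _ _).mpr hcr⟩
    · exact (h2 f.1 (Or.inl rfl) e.2 (Or.inr rfl)).2 ⟨hfA, heB, (hrep _ _).mpr hcr⟩
  · have heE' : (T e.2 ∩ S e.1).Nonempty := by
      obtain ⟨x, hx1, hx2⟩ := (hrep _ _).mp heE; exact ⟨x, hx2, hx1⟩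
    have hfE' : (T f.2 ∩ S f.1).Nonempty := by
      obtain ⟨x, hx1, hx2⟩ := (hrep _ _).mp hfE; exact ⟨x, hx2, hx1⟩
    rcases key_lemma hT hS p hpT hpS (u := e.2) (w := e.1) (u' := f.2) (w' := f.1)
      (θ := max (p e.2) (p f.2))
      (le_max_left _ _) (le_max_right _ _)
      (max_le (hm _ heA _ heB) (hm _ heA _ hfB))
      (max_le (hm _ hfA _ heB) (hm _ hfA _ hfB))
      heE' hfE' with hcr | hcr
    · obtain ⟨x, hx1, hx2⟩ := hcr
      exact (h2 f.1 (Or.inl rfl) e.2 (Or.inr rfl)).2 ⟨hfA, heB, (hrep _ _).mpr ⟨x, hx2, hx1⟩⟩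
    · obtain ⟨x, hx1, hx2⟩ := hcr
      exact (h1 e.1 (Or.inl rfl) f.2 (Or.inr rfl)).2 ⟨heA, hfB, (hrep _ _).mpr ⟨x, hx2, hx1⟩⟩

lemma bimim_le_two_mono {E : V → V → Prop} {S T : V → Set ℝ}
    (hS : ∀ v, ∃ a b : ℝ, a ≤ b ∧ S v = Set.Icc a b)
    (hT : ∀ v, ∃ a b : ℝ, a ≤ b ∧ T v = Set.Icc a b)
    (p : V → ℝ) (hpS : ∀ v, p v ∈ S v) (hpT : ∀ v, p v ∈ T v)
    (hrep : ∀ v w, E v w ↔ (S v ∩ T w).Nonempty)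
    {A : Set V}
    (hA : (∀ u ∈ A, ∀ w ∈ Aᶜ, p u ≤ p w) ∨ (∀ u ∈ A, ∀ w ∈ Aᶜ, p w ≤ p u)) :
    bimimCut E A ≤ 2 := by
  have h1 : nu (cutRel E A Aᶜ) ≤ 1 := nu_cut_le_one_mono hS hT p hpS hpT hrep hA
  have h2 : nu (cutRel E Aᶜ A) ≤ 1 := by
    apply nu_cut_le_one_mono hS hT p hpS hpT hrep
    rcases hA with h | h
    · exact Or.inr (fun u hu w hw => h w hw u hu)
    · exact Or.inl (fun u hu w hw => h w hw u hu)
  exact add_le_add h1 h2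

end Aux
section Comb

open Sum SimpleGraph

abbrev CombL (k : ℕ) : Type := Fin (k+3) ⊕ Fin (k+1)

def combAdj (k : ℕ) : CombL k → CombL k → Prop
  | inl _, inl _ => False
  | inl a, inr i => (i : ℕ) = min ((a : ℕ) - 1) k
  | inr i, inl a => (i : ℕ) = min ((a : ℕ) - 1) k
  | inr i, inr j => (i : ℕ) + 1 = (j : ℕ) ∨ (j : ℕ) + 1 = (i : ℕ)

def comb (k : ℕ) : SimpleGraph (CombL k) where
  Adj := combAdj k
  symm := by constructor; rintro (a | i) (b | j) h <;> simp only [combAdj] at * <;> tauto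
  loopless := by constructor; rintro (a | i) h <;> simp only [combAdj] at h <;> omega

@[simp] lemma comb_adj_ll {k : ℕ} (a b : Fin (k+3)) :
    (comb k).Adj (inl a) (inl b) ↔ False := Iff.rfl
@[simp] lemma comb_adj_lr {k : ℕ} (a : Fin (k+3)) (i : Fin (k+1)) :
    (comb k).Adj (inl a) (inr i) ↔ (i : ℕ) = min ((a : ℕ) - 1) k := Iff.rfl
@[simp] lemma comb_adj_rl {k : ℕ} (a : Fin (k+3)) (i : Fin (k+1)) :
    (comb k).Adj (inr i) (inl a) ↔ (i : ℕ) = min ((a : ℕ) - 1) k := Iff.rfl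
@[simp] lemma comb_adj_rr {k : ℕ} (i j : Fin (k+1)) :
    (comb k).Adj (inr i) (inr j) ↔ (i : ℕ) + 1 = (j : ℕ) ∨ (j : ℕ) + 1 = (i : ℕ) := Iff.rfl

lemma walk_closed {W : Type} {H : SimpleGraph W} {X : Set W}
    (hX : ∀ a b, a ∈ X → H.Adj a b → b ∈ X) :
    ∀ {x y : W}, H.Walk x y → x ∈ X → y ∈ X
  | _, _, SimpleGraph.Walk.nil, hx => hx
  | _, _, SimpleGraph.Walk.cons h q, hx => walk_closed hX q (hX _ _ hx h)

lemma reach_closed {W : Type} {H : SimpleGraph W} {X : Set W}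
    (hX : ∀ a b, a ∈ X → H.Adj a b → b ∈ X) {x y : W}
    (h : H.Reachable x y) (hx : x ∈ X) : y ∈ X :=
  h.elim fun w => walk_closed hX w hx

lemma reach_seg {k : ℕ} (H : SimpleGraph (CombL k)) (lo hi : ℕ) (hhi : hi ≤ k)
    (hadj : ∀ (q : ℕ) (_ : lo ≤ q) (hq2 : q < hi),
      H.Adj (inr ⟨q, by omega⟩) (inr ⟨q+1, by omega⟩))
    {a b : ℕ} (ha1 : lo ≤ a) (ha2 : a ≤ hi) (hb1 : lo ≤ b) (hb2 : b ≤ hi) :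
    H.Reachable (inr ⟨a, by omega⟩) (inr ⟨b, by omega⟩) := by
  have main : ∀ (c : ℕ) (_hc1 : lo ≤ c) (_hc2 : c ≤ hi),
      H.Reachable (inr ⟨lo, by omega⟩) (inr ⟨c, by omega⟩) := by
    intro c
    induction c with
    | zero =>
      intro h1 _
      have h0 : lo = 0 := Nat.le_zero.mp h1
      subst h0
      exact SimpleGraph.Reachable.refl _
    | succ c ih =>
      intro h1 h2
      rcases Nat.eq_or_lt_of_le h1 with h | h
      · subst h
        exact SimpleGraph.Reachable.refl _
      · have hlc : lo ≤ c := by omega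
        exact (ih hlc (by omega)).trans (hadj c hlc (by omega)).reachable
  exact (main a ha1 ha2).symm.trans (main b hb1 hb2)

end Comb
section Comb2

open Sum SimpleGraph

lemma leaf_isolated {k : ℕ} {a : Fin (k+3)} {i : Fin (k+1)}
    (hai : (i : ℕ) = min ((a : ℕ) - 1) k) {x : CombL k}
    (h : ((comb k).deleteEdges {s(inl a, inr i)}).Reachable (inl a) x) : x = inl a := by
  have hcl : ∀ y z : CombL k, y ∈ ({inl a} : Set (CombL k)) →
      ((comb k).deleteEdges {s(inl a, inr i)}).Adj y z → z ∈ ({inl a} : Set (CombL k)) := by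
    intro y z hy hz
    rw [Set.mem_singleton_iff] at hy
    subst hy
    rw [SimpleGraph.deleteEdges_adj] at hz
    obtain ⟨hadj, hne⟩ := hz
    exfalso
    cases z with
    | inl b => exact hadj
    | inr j =>
      apply hne
      rw [Set.mem_singleton_iff]
      have hj : j = i := Fin.ext (by rw [comb_adj_lr] at hadj; omega)
      rw [hj]
  exact reach_closed hcl h rfl

lemma leaf_step_del_leaf {k : ℕ} {a b : Fin (k+3)} {i : Fin (k+1)} (hb : b ≠ a) :
    ((comb k).deleteEdges {s(inl a, inr i)}).Adj
      (inr ⟨min ((b : ℕ) - 1) k, by omega⟩) (inl b) := by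
  rw [SimpleGraph.deleteEdges_adj]
  refine ⟨rfl, ?_⟩
  intro hm
  rw [Set.mem_singleton_iff, Sym2.eq_iff] at hm
  rcases hm with ⟨h1, -⟩ | ⟨-, h2⟩
  · simp at h1
  · exact hb (Sum.inl_injective h2)

lemma leaf_other_side {k : ℕ} {a : Fin (k+3)} {i : Fin (k+1)}
    (hai : (i : ℕ) = min ((a : ℕ) - 1) k) {b : Fin (k+3)} (hb : b ≠ a) :
    ((comb k).deleteEdges {s(inl a, inr i)}).Reachable (inr i) (inl b) := by
  have hs := reach_seg ((comb k).deleteEdges {s(inl a, inr i)}) 0 k le_rfl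
    (fun q _ hq2 => by
      rw [SimpleGraph.deleteEdges_adj]
      refine ⟨Or.inl rfl, ?_⟩
      intro hm
      rw [Set.mem_singleton_iff, Sym2.eq_iff] at hm
      rcases hm with ⟨h1, -⟩ | ⟨-, h2⟩
      · simp at h1
      · simp at h2)
    (a := (i : ℕ)) (b := min ((b : ℕ) - 1) k) (by omega) (by omega) (by omega) (by omega)
  exact hs.trans (leaf_step_del_leaf hb).reachable

lemma spine_closed_low {k : ℕ} {i j : Fin (k+1)} (hij : (i : ℕ) + 1 = (j : ℕ)) {x : CombL k}
    (h : ((comb k).deleteEdges {s(inr i, inr j)}).Reachable (inr i) x) :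
    Sum.elim (fun b : Fin (k+3) => (b : ℕ) ≤ (i : ℕ) + 1)
      (fun q : Fin (k+1) => (q : ℕ) ≤ (i : ℕ)) x := by
  have hcl : ∀ y z : CombL k,
      y ∈ {t : CombL k | Sum.elim (fun b : Fin (k+3) => (b : ℕ) ≤ (i : ℕ) + 1)
        (fun q : Fin (k+1) => (q : ℕ) ≤ (i : ℕ)) t} →
      ((comb k).deleteEdges {s(inr i, inr j)}).Adj y z →
      z ∈ {t : CombL k | Sum.elim (fun b : Fin (k+3) => (b : ℕ) ≤ (i : ℕ) + 1)
        (fun q : Fin (k+1) => (q : ℕ) ≤ (i : ℕ)) t} := by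
    intro y z hy hz
    rw [SimpleGraph.deleteEdges_adj] at hz
    obtain ⟨hadj, hne⟩ := hz
    cases y with
    | inl b =>
      have hb : (b : ℕ) ≤ (i : ℕ) + 1 := hy
      cases z with
      | inl c => exact hadj.elim
      | inr q =>
        have hq : (q : ℕ) = min ((b : ℕ) - 1) k := hadj
        show (q : ℕ) ≤ (i : ℕ)
        omega
    | inr q =>
      have hq : (q : ℕ) ≤ (i : ℕ) := hy
      cases z with
      | inl b =>
        have hb : (q : ℕ) = min ((b : ℕ) - 1) k := hadj
        show (b : ℕ) ≤ (i : ℕ) + 1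
        omega
      | inr q' =>
        show (q' : ℕ) ≤ (i : ℕ)
        have hadj' : (q : ℕ) + 1 = (q' : ℕ) ∨ (q' : ℕ) + 1 = (q : ℕ) := hadj
        rcases hadj' with h5 | h5
        · rcases Nat.lt_or_ge (q : ℕ) (i : ℕ) with h6 | h6
          · omega
          · exfalso
            apply hne
            rw [Set.mem_singleton_iff]
            have h7 : q = i := Fin.ext (by omega)
            have h8 : q' = j := Fin.ext (by omega)
            rw [h7, h8]
        · omega
  exact reach_closed hcl h (by show (i : ℕ) ≤ (i : ℕ); exact le_refl _)

lemma spine_edge_survives {k : ℕ} {i j : Fin (k+1)} (q : ℕ) (hq : q + 1 ≤ k)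
    (hnot : ¬((q = (i : ℕ) ∧ q + 1 = (j : ℕ)) ∨ (q = (j : ℕ) ∧ q + 1 = (i : ℕ)))) :
    ((comb k).deleteEdges {s(inr i, inr j)}).Adj (inr ⟨q, by omega⟩) (inr ⟨q+1, by omega⟩) := by
  rw [SimpleGraph.deleteEdges_adj]
  refine ⟨Or.inl rfl, ?_⟩
  intro hm
  rw [Set.mem_singleton_iff, Sym2.eq_iff] at hm
  apply hnot
  rcases hm with ⟨h1, h2⟩ | ⟨h1, h2⟩
  · exact Or.inl ⟨congrArg Fin.val (Sum.inr_injective h1),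
      congrArg Fin.val (Sum.inr_injective h2)⟩
  · exact Or.inr ⟨congrArg Fin.val (Sum.inr_injective h1),
      congrArg Fin.val (Sum.inr_injective h2)⟩

lemma leaf_step_del_spine {k : ℕ} {b : Fin (k+3)} {i j : Fin (k+1)} :
    ((comb k).deleteEdges {s(inr i, inr j)}).Adj
      (inr ⟨min ((b : ℕ) - 1) k, by omega⟩) (inl b) := by
  rw [SimpleGraph.deleteEdges_adj]
  refine ⟨rfl, ?_⟩
  intro hm
  rw [Set.mem_singleton_iff, Sym2.eq_iff] at hm
  rcases hm with ⟨-, h1⟩ | ⟨-, h1⟩ <;> simp at h1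

lemma spine_reach_low {k : ℕ} {i j : Fin (k+1)} (hij : (i : ℕ) + 1 = (j : ℕ))
    {b : Fin (k+3)} (hb : (b : ℕ) ≤ (i : ℕ) + 1) :
    ((comb k).deleteEdges {s(inr i, inr j)}).Reachable (inr i) (inl b) := by
  have hjk : (j : ℕ) ≤ k := by omega
  have hs := reach_seg ((comb k).deleteEdges {s(inr i, inr j)}) 0 (i : ℕ) (by omega)
    (fun q _ hq2 => spine_edge_survives q (by omega) (by omega))
    (a := (i : ℕ)) (b := min ((b : ℕ) - 1) k) (by omega) (by omega) (by omega) (by omega)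
  exact hs.trans leaf_step_del_spine.reachable

end Comb2
section Comb3

open Sum SimpleGraph

lemma spine_closed_high {k : ℕ} {i j : Fin (k+1)} (hij : (i : ℕ) + 1 = (j : ℕ)) {x : CombL k}
    (h : ((comb k).deleteEdges {s(inr i, inr j)}).Reachable (inr j) x) :
    Sum.elim (fun b : Fin (k+3) => (i : ℕ) + 2 ≤ (b : ℕ))
      (fun q : Fin (k+1) => (i : ℕ) + 1 ≤ (q : ℕ)) x := by
  have hcl : ∀ y z : CombL k,
      y ∈ {t : CombL k | Sum.elim (fun b : Fin (k+3) => (i : ℕ) + 2 ≤ (b : ℕ))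
        (fun q : Fin (k+1) => (i : ℕ) + 1 ≤ (q : ℕ)) t} →
      ((comb k).deleteEdges {s(inr i, inr j)}).Adj y z →
      z ∈ {t : CombL k | Sum.elim (fun b : Fin (k+3) => (i : ℕ) + 2 ≤ (b : ℕ))
        (fun q : Fin (k+1) => (i : ℕ) + 1 ≤ (q : ℕ)) t} := by
    intro y z hy hz
    rw [SimpleGraph.deleteEdges_adj] at hz
    obtain ⟨hadj, hne⟩ := hz
    cases y with
    | inl b =>
      have hb : (i : ℕ) + 2 ≤ (b : ℕ) := hy
      cases z with
      | inl c => exact hadj.elim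
      | inr q =>
        have hq : (q : ℕ) = min ((b : ℕ) - 1) k := hadj
        show (i : ℕ) + 1 ≤ (q : ℕ)
        omega
    | inr q =>
      have hq : (i : ℕ) + 1 ≤ (q : ℕ) := hy
      cases z with
      | inl b =>
        have hb : (q : ℕ) = min ((b : ℕ) - 1) k := hadj
        show (i : ℕ) + 2 ≤ (b : ℕ)
        omega
      | inr q' =>
        show (i : ℕ) + 1 ≤ (q' : ℕ)
        have hadj' : (q : ℕ) + 1 = (q' : ℕ) ∨ (q' : ℕ) + 1 = (q : ℕ) := hadj
        rcases hadj' with h5 | h5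
        · omega
        · rcases Nat.lt_or_ge ((i : ℕ) + 1) (q : ℕ) with h6 | h6
          · omega
          · exfalso
            apply hne
            rw [Set.mem_singleton_iff]
            have h7 : q = j := Fin.ext (by omega)
            have h8 : q' = i := Fin.ext (by omega)
            rw [h7, h8, Sym2.eq_swap]
  exact reach_closed hcl h (by show (i : ℕ) + 1 ≤ (j : ℕ); omega)

lemma spine_reach_high {k : ℕ} {i j : Fin (k+1)} (hij : (i : ℕ) + 1 = (j : ℕ))
    {b : Fin (k+3)} (hb : (i : ℕ) + 2 ≤ (b : ℕ)) :
    ((comb k).deleteEdges {s(inr i, inr j)}).Reachable (inr j) (inl b) := by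
  have hjk : (j : ℕ) ≤ k := by omega
  have hs := reach_seg ((comb k).deleteEdges {s(inr i, inr j)}) (j : ℕ) k le_rfl
    (fun q hq1 hq2 => spine_edge_survives q (by omega) (by omega))
    (a := (j : ℕ)) (b := min ((b : ℕ) - 1) k) le_rfl (by omega) (by omega) (by omega)
  exact hs.trans leaf_step_del_spine.reachable

lemma spine_side_low_iff {k : ℕ} {i j : Fin (k+1)} (hij : (i : ℕ) + 1 = (j : ℕ))
    (b : Fin (k+3)) :
    ((comb k).deleteEdges {s(inr i, inr j)}).Reachable (inr i) (inl b) ↔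
      (b : ℕ) ≤ (i : ℕ) + 1 :=
  ⟨fun h => spine_closed_low hij h, fun h => spine_reach_low hij h⟩

lemma spine_side_high_iff {k : ℕ} {i j : Fin (k+1)} (hij : (i : ℕ) + 1 = (j : ℕ))
    (b : Fin (k+3)) :
    ((comb k).deleteEdges {s(inr i, inr j)}).Reachable (inr j) (inl b) ↔
      (i : ℕ) + 2 ≤ (b : ℕ) :=
  ⟨fun h => spine_closed_high hij h, fun h => spine_reach_high hij h⟩

lemma leaf_side_iff' {k : ℕ} {a : Fin (k+3)} {i : Fin (k+1)}
    (hai : (i : ℕ) = min ((a : ℕ) - 1) k) (b : Fin (k+3)) :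
    ((comb k).deleteEdges {s(inl a, inr i)}).Reachable (inr i) (inl b) ↔ b ≠ a := by
  constructor
  · rintro h rfl
    have := leaf_isolated hai h.symm
    simp at this
  · exact leaf_other_side hai

lemma spine_bridge_notreach {k : ℕ} {i j : Fin (k+1)} (hij : (i : ℕ) + 1 = (j : ℕ)) :
    ¬ ((comb k).deleteEdges {s(inr i, inr j)}).Reachable (inr i) (inr j) := by
  intro h
  have := spine_closed_low hij h
  have h2 : (j : ℕ) ≤ (i : ℕ) := this
  omega

lemma comb_connected (k : ℕ) : (comb k).Connected := by
  rw [SimpleGraph.connected_iff]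
  refine ⟨?_, ⟨inr ⟨0, by omega⟩⟩⟩
  have root : ∀ x : CombL k, (comb k).Reachable x (inr ⟨0, by omega⟩) := by
    have spine : ∀ i : Fin (k+1), (comb k).Reachable (inr i) (inr ⟨0, by omega⟩) := by
      intro i
      exact reach_seg (comb k) 0 k le_rfl (fun q _ _ => Or.inl rfl)
        (a := (i : ℕ)) (b := 0) (by omega) (by omega) (by omega) (by omega)
    intro x
    cases x with
    | inr i => exact spine i
    | inl a =>
      have hadj : (comb k).Adj (inl a) (inr ⟨min ((a : ℕ) - 1) k, by omega⟩) := rfl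
      exact hadj.reachable.trans (spine _)
  intro x y
  exact (root x).trans (root y).symm

lemma comb_acyclic (k : ℕ) : (comb k).IsAcyclic := by
  rw [SimpleGraph.isAcyclic_iff_forall_adj_isBridge]
  intro v w hadj
  rw [SimpleGraph.isBridge_iff]
  show ¬ ((comb k).deleteEdges {s(v, w)}).Reachable v w
  cases v with
  | inl a =>
    cases w with
    | inl b => exact hadj.elim
    | inr i =>
      intro h
      have := leaf_isolated hadj h
      simp at this
  | inr i =>
    cases w with
    | inl a =>
      intro h
      rw [show s(inr i, (inl a : CombL k)) = s(inl a, inr i) from Sym2.eq_swap] at h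
      have := leaf_isolated hadj h.symm
      simp at this
    | inr j =>
      rcases hadj with h5 | h5
      · exact spine_bridge_notreach h5
      · intro h
        rw [show s((inr i : CombL k), inr j) = s(inr j, inr i) from Sym2.eq_swap] at h
        exact spine_bridge_notreach h5 h.symm

end Comb3
section Comb4

open Sum SimpleGraph

lemma ncard_triple {W : Type} [Finite W] {x y z : W} (h1 : x ≠ y) (h2 : x ≠ z) (h3 : y ≠ z) :
    ({x, y, z} : Set W).ncard = 3 := by
  rw [Set.ncard_insert_of_notMem (by simp [h1, h2]),
    Set.ncard_insert_of_notMem (by simp [h3]), Set.ncard_singleton]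

lemma nbhd_inl (k : ℕ) (a : Fin (k+3)) :
    (comb k).neighborSet (inl a) = {inr ⟨min ((a : ℕ) - 1) k, by omega⟩} := by
  ext x
  cases x with
  | inl b =>
    simp only [SimpleGraph.mem_neighborSet, comb_adj_ll, Set.mem_singleton_iff,
      reduceCtorEq, iff_false]
  | inr q =>
    simp only [SimpleGraph.mem_neighborSet, comb_adj_lr, Set.mem_singleton_iff,
      Sum.inr.injEq, Fin.ext_iff]

lemma nbhd_inl_ncard (k : ℕ) (a : Fin (k+3)) :
    ((comb k).neighborSet (inl a)).ncard = 1 := by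
  rw [nbhd_inl]; exact Set.ncard_singleton _

lemma nbhd_inr_ncard (k : ℕ) (i : Fin (k+1)) :
    ((comb k).neighborSet (inr i)).ncard = 3 := by
  rcases Nat.eq_zero_or_pos (i : ℕ) with h0 | h0 <;> rcases eq_or_ne (i : ℕ) k with hk | hk
  · -- i = 0, i = k (so k = 0)
    have hset : (comb k).neighborSet (inr i) =
        {inl ⟨0, by omega⟩, inl ⟨(i : ℕ) + 1, by omega⟩, inl ⟨k + 2, by omega⟩} := by
      ext x
      cases x with
      | inl b =>
        simp only [SimpleGraph.mem_neighborSet, comb_adj_rl, Set.mem_insert_iff,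
          Set.mem_singleton_iff, Sum.inl.injEq, Fin.ext_iff]
        omega
      | inr q =>
        simp only [SimpleGraph.mem_neighborSet, comb_adj_rr, Set.mem_insert_iff,
          Set.mem_singleton_iff, reduceCtorEq, or_self, iff_false]
        omega
    rw [hset]
    exact ncard_triple (by intro h; simp only [Sum.inl.injEq, Fin.mk.injEq] at h <;> omega) (by simp [Fin.ext_iff] <;> omega)
      (by simp [Fin.ext_iff] <;> omega)
  · -- i = 0 < k
    have hset : (comb k).neighborSet (inr i) =
        {inl ⟨0, by omega⟩, inl ⟨(i : ℕ) + 1, by omega⟩, inr ⟨(i : ℕ) + 1, by omega⟩} := by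
      ext x
      cases x with
      | inl b =>
        simp only [SimpleGraph.mem_neighborSet, comb_adj_rl, Set.mem_insert_iff,
          Set.mem_singleton_iff, Sum.inl.injEq, reduceCtorEq, Fin.ext_iff, or_false]
        omega
      | inr q =>
        simp only [SimpleGraph.mem_neighborSet, comb_adj_rr, Set.mem_insert_iff,
          Set.mem_singleton_iff, Sum.inr.injEq, reduceCtorEq, Fin.ext_iff, false_or]
        omega
    rw [hset]
    exact ncard_triple (by intro h; simp only [Sum.inl.injEq, Fin.mk.injEq] at h <;> omega) (by simp) (by simp)
  · -- 0 < i = k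
    have hset : (comb k).neighborSet (inr i) =
        {inr ⟨(i : ℕ) - 1, by omega⟩, inl ⟨(i : ℕ) + 1, by omega⟩, inl ⟨k + 2, by omega⟩} := by
      ext x
      cases x with
      | inl b =>
        simp only [SimpleGraph.mem_neighborSet, comb_adj_rl, Set.mem_insert_iff,
          Set.mem_singleton_iff, Sum.inl.injEq, reduceCtorEq, Fin.ext_iff, false_or]
        omega
      | inr q =>
        simp only [SimpleGraph.mem_neighborSet, comb_adj_rr, Set.mem_insert_iff,
          Set.mem_singleton_iff, Sum.inr.injEq, reduceCtorEq, Fin.ext_iff, or_false]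
        omega
    rw [hset]
    exact ncard_triple (by simp) (by simp) (by simp [Fin.ext_iff] <;> omega)
  · -- 0 < i < k
    have hset : (comb k).neighborSet (inr i) =
        {inr ⟨(i : ℕ) - 1, by omega⟩, inl ⟨(i : ℕ) + 1, by omega⟩, inr ⟨(i : ℕ) + 1, by omega⟩} := by
      ext x
      cases x with
      | inl b =>
        simp only [SimpleGraph.mem_neighborSet, comb_adj_rl, Set.mem_insert_iff,
          Set.mem_singleton_iff, Sum.inl.injEq, reduceCtorEq, Fin.ext_iff, false_or, or_false]
        omega
      | inr q =>
        simp only [SimpleGraph.mem_neighborSet, comb_adj_rr, Set.mem_insert_iff,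
          Set.mem_singleton_iff, Sum.inr.injEq, reduceCtorEq, Fin.ext_iff, false_or, or_false]
        omega
    rw [hset]
    exact ncard_triple (by simp) (by simp [Fin.ext_iff] <;> omega) (by simp)

def downWalk (k : ℕ) : (q : ℕ) → (h : q ≤ k) → (comb k).Walk (inr ⟨q, by omega⟩) (inr ⟨0, by omega⟩)
  | 0, _ => SimpleGraph.Walk.nil
  | q+1, h => SimpleGraph.Walk.cons (by simp) (downWalk k q (by omega))

lemma downWalk_support_sub (k : ℕ) : ∀ (q : ℕ) (h : q ≤ k) (x : CombL k),
    x ∈ (downWalk k q h).support → ∃ r : Fin (k+1), x = inr r ∧ (r : ℕ) ≤ q := by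
  intro q
  induction q with
  | zero =>
    intro h x hx
    rw [downWalk, SimpleGraph.Walk.support_nil] at hx
    rcases List.mem_singleton.mp hx with rfl
    exact ⟨⟨0, by omega⟩, rfl, le_rfl⟩
  | succ q ih =>
    intro h x hx
    rw [downWalk, SimpleGraph.Walk.support_cons] at hx
    rcases List.mem_cons.mp hx with rfl | hx
    · exact ⟨⟨q+1, by omega⟩, rfl, le_rfl⟩
    · obtain ⟨r, rfl, hr⟩ := ih (by omega) x hx
      exact ⟨r, rfl, by omega⟩

lemma downWalk_support_mem (k : ℕ) : ∀ (q : ℕ) (h : q ≤ k) (r : Fin (k+1)), (r : ℕ) ≤ q →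
    (inr r : CombL k) ∈ (downWalk k q h).support := by
  intro q
  induction q with
  | zero =>
    intro h r hr
    rw [downWalk, SimpleGraph.Walk.support_nil]
    have : r = ⟨0, by omega⟩ := Fin.ext (by omega : (r : ℕ) = 0)
    rw [this]
    exact List.mem_singleton.mpr rfl
  | succ q ih =>
    intro h r hr
    rw [downWalk, SimpleGraph.Walk.support_cons]
    rcases Nat.lt_or_ge (r : ℕ) (q+1) with h5 | h5
    · exact List.mem_cons.mpr (Or.inr (ih (by omega) r (by omega)))
    · have : r = ⟨q+1, by omega⟩ := Fin.ext (by omega : (r : ℕ) = q + 1)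
      rw [this]
      exact List.mem_cons.mpr (Or.inl rfl)

lemma downWalk_isPath (k : ℕ) : ∀ (q : ℕ) (h : q ≤ k), (downWalk k q h).IsPath := by
  intro q
  induction q with
  | zero => intro h; rw [downWalk]; exact SimpleGraph.Walk.IsPath.nil
  | succ q ih =>
    intro h
    rw [downWalk]
    refine SimpleGraph.Walk.IsPath.cons (ih (by omega)) ?_
    intro hmem
    obtain ⟨r, hr, hr2⟩ := downWalk_support_sub k q (by omega) _ hmem
    have := Sum.inr_injective hr
    have : q + 1 = (r : ℕ) := congrArg Fin.val this
    omega

lemma comb_caterpillar (k : ℕ) : IsCaterpillar (comb k) := by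
  refine ⟨inr ⟨k, by omega⟩, inr ⟨0, by omega⟩, downWalk k k le_rfl,
    downWalk_isPath k k le_rfl, ?_⟩
  intro w hw
  cases w with
  | inr i =>
    exact absurd (downWalk_support_mem k k le_rfl i (by omega)) hw
  | inl a =>
    refine ⟨inr ⟨min ((a : ℕ) - 1) k, by omega⟩,
      downWalk_support_mem k k le_rfl _ (by omega), ?_⟩
    exact rfl

def combBD (k : ℕ) {V : Type} (idx : V ≃ Fin (k+3)) : BranchDecomp V where
  L := CombL k
  finL := by infer_instance
  T := comb k
  isTree := ⟨comb_connected k, comb_acyclic k⟩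
  two_le := by
    rw [Nat.card_sum]
    simp [Nat.card_eq_fintype_card]
    omega
  subcubic := by
    rintro (a | i)
    · exact Or.inl (nbhd_inl_ncard k a)
    · exact Or.inr (nbhd_inr_ncard k i)
  toLeaf := fun v => inl (idx v)
  inj := fun u v h => idx.injective (Sum.inl_injective h)
  mem_leaf := fun v => nbhd_inl_ncard k (idx v)
  surj := by
    rintro (a | i) h
    · exact ⟨idx.symm a, by simp⟩
    · rw [nbhd_inr_ncard] at h
      omega

end Comb4
section Comb5

open Sum SimpleGraph

lemma combBD_width_le {k : ℕ} {V : Type} (idx : V ≃ Fin (k+3))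
    {E : V → V → Prop} {S T : V → Set ℝ}
    (hS : ∀ v, ∃ a b : ℝ, a ≤ b ∧ S v = Set.Icc a b)
    (hT : ∀ v, ∃ a b : ℝ, a ≤ b ∧ T v = Set.Icc a b)
    (p : V → ℝ) (hpS : ∀ v, p v ∈ S v) (hpT : ∀ v, p v ∈ T v)
    (hrep : ∀ v w, E v w ↔ (S v ∩ T w).Nonempty)
    (hmono : ∀ u w : V, ((idx u : ℕ) ≤ (idx w : ℕ)) → p u ≤ p w) :
    (combBD k idx).width E ≤ 2 := by
  apply csSup_le'
  rintro n ⟨t₁, t₂, hadj, rfl⟩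
  have hside : ∀ s t : CombL k, (combBD k idx).side s t =
      {v : V | ((comb k).deleteEdges {s(s, t)}).Reachable s (inl (idx v))} := fun _ _ => rfl
  rcases t₁ with a | i
  · rcases t₂ with b | i
    · exact (hadj : False).elim
    · -- leaf edge, side from the leaf: side ⊆ {idx⁻¹ a}
      apply bimim_le_two_subsingleton
      left
      intro u hu v hv
      rw [hside, Set.mem_setOf_eq] at hu hv
      have h1 : idx u = a := Sum.inl_injective (leaf_isolated hadj hu)
      have h2 : idx v = a := Sum.inl_injective (leaf_isolated hadj hv)
      exact idx.injective (h1.trans h2.symm)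
  · rcases t₂ with a | j
    · -- leaf edge, side from the spine: complement is a subsingleton
      apply bimim_le_two_subsingleton
      right
      intro u hu v hv
      rw [Set.mem_compl_iff, hside, Set.mem_setOf_eq] at hu hv
      rw [show s((inr i : CombL k), inl a) = s(inl a, inr i) from Sym2.eq_swap] at hu hv
      have h1 : idx u = a := by
        by_contra hne
        exact hu ((leaf_side_iff' hadj (idx u)).mpr hne)
      have h2 : idx v = a := by
        by_contra hne
        exact hv ((leaf_side_iff' hadj (idx v)).mpr hne)
      exact idx.injective (h1.trans h2.symm)
    · -- spine edge
      rcases hadj with h5 | h5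
      · -- i + 1 = j : side from the low end is a prefix
        apply bimim_le_two_mono hS hT p hpS hpT hrep
        left
        intro u hu w hw
        rw [hside, Set.mem_setOf_eq] at hu
        rw [Set.mem_compl_iff, hside, Set.mem_setOf_eq] at hw
        have h1 : (idx u : ℕ) ≤ (i : ℕ) + 1 := (spine_side_low_iff h5 (idx u)).mp hu
        have h2 : ¬ (idx w : ℕ) ≤ (i : ℕ) + 1 :=
          fun hc => hw ((spine_side_low_iff h5 (idx w)).mpr hc)
        exact hmono u w (by omega)
      · -- j + 1 = i : side from the high end is a suffix
        apply bimim_le_two_mono hS hT p hpS hpT hrep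
        right
        intro u hu w hw
        rw [hside, Set.mem_setOf_eq] at hu
        rw [Set.mem_compl_iff, hside, Set.mem_setOf_eq] at hw
        rw [show s((inr i : CombL k), inr j) = s(inr j, inr i) from Sym2.eq_swap] at hu hw
        have h1 : (j : ℕ) + 2 ≤ (idx u : ℕ) := (spine_side_high_iff h5 (idx u)).mp hu
        have h2 : ¬ (j : ℕ) + 2 ≤ (idx w : ℕ) :=
          fun hc => hw ((spine_side_high_iff h5 (idx w)).mpr hc)
        exact hmono w u (by omega)

end Comb5
section Pair

open SimpleGraph

lemma pair_connected : (⊤ : SimpleGraph Bool).Connected := by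
  rw [SimpleGraph.connected_iff]
  refine ⟨?_, inferInstance⟩
  intro x y
  by_cases h : x = y
  · rw [h]
  · exact ((SimpleGraph.top_adj x y).mpr h).reachable

lemma pair_acyclic : (⊤ : SimpleGraph Bool).IsAcyclic := by
  intro v c hc
  have h3 := hc.three_le_length
  have hnd := hc.support_nodup
  have hlen := hnd.length_le_card
  have hsup : c.support.length = c.length + 1 := SimpleGraph.Walk.length_support c
  have htail : c.support.tail.length = c.support.length - 1 := List.length_tail
  simp only [Fintype.card_bool] at hlen
  omega

lemma pair_nbhd (t : Bool) : (⊤ : SimpleGraph Bool).neighborSet t = {!t} := by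
  ext y
  simp only [SimpleGraph.mem_neighborSet, SimpleGraph.top_adj, Set.mem_singleton_iff]
  cases t <;> cases y <;> decide

lemma pair_no_edges (t₁ t₂ : Bool) (h : t₁ ≠ t₂) (x y : Bool) :
    ¬ ((⊤ : SimpleGraph Bool).deleteEdges {s(t₁, t₂)}).Adj x y := by
  rw [SimpleGraph.deleteEdges_adj]
  rintro ⟨hxy, hne⟩
  apply hne
  rw [Set.mem_singleton_iff]
  rw [SimpleGraph.top_adj] at hxy
  have key : ∀ a b c d : Bool, c ≠ d → a ≠ b → s(a, b) = s(c, d) := by decide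
  exact key x y t₁ t₂ h hxy

def pairBD {V : Type} (idx : V ≃ Bool) : BranchDecomp V where
  L := Bool
  finL := inferInstance
  T := ⊤
  isTree := ⟨pair_connected, pair_acyclic⟩
  two_le := by simp [Nat.card_eq_fintype_card]
  subcubic := fun t => Or.inl (by rw [pair_nbhd]; exact Set.ncard_singleton _)
  toLeaf := idx
  inj := idx.injective
  mem_leaf := fun v => by rw [pair_nbhd]; exact Set.ncard_singleton _
  surj := fun t _ => ⟨idx.symm t, by simp⟩

lemma pair_caterpillar : IsCaterpillar (⊤ : SimpleGraph Bool) := by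
  refine ⟨false, true, SimpleGraph.Walk.cons (by simp) SimpleGraph.Walk.nil, ?_, ?_⟩
  · rw [SimpleGraph.Walk.isPath_def]
    simp
  · intro w hw
    exfalso
    apply hw
    rw [SimpleGraph.Walk.support_cons, SimpleGraph.Walk.support_nil]
    cases w <;> simp

lemma pairBD_width_le {V : Type} (idx : V ≃ Bool) (E : V → V → Prop) :
    (pairBD idx).width E ≤ 2 := by
  apply csSup_le'
  rintro n ⟨t₁, t₂, hadj, rfl⟩
  have hne : t₁ ≠ t₂ := hadj.ne
  apply bimim_le_two_subsingleton
  left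
  intro u hu v hv
  have hu' : ((⊤ : SimpleGraph Bool).deleteEdges {s(t₁, t₂)}).Reachable t₁ (idx u) := hu
  have hv' : ((⊤ : SimpleGraph Bool).deleteEdges {s(t₁, t₂)}).Reachable t₁ (idx v) := hv
  have h1 : idx u ∈ ({t₁} : Set Bool) :=
    reach_closed (fun a b _ hb => absurd hb (pair_no_edges t₁ t₂ hne a b)) hu' rfl
  have h2 : idx v ∈ ({t₁} : Set Bool) :=
    reach_closed (fun a b _ hb => absurd hb (pair_no_edges t₁ t₂ hne a b)) hv' rfl
  change idx u = t₁ at h1; change idx v = t₁ at h2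
  exact idx.injective (h1.trans h2.symm)

end Pair
theorem stmt_9 {V : Type} [Fintype V] (h2 : 2 ≤ Nat.card V)
    (E : V → V → Prop) (S T : V → Set ℝ)
    (hS : ∀ v, ∃ a b : ℝ, a ≤ b ∧ S v = Set.Icc a b)
    (hT : ∀ v, ∃ a b : ℝ, a ≤ b ∧ T v = Set.Icc a b)
    (hrep : ∀ v w, E v w ↔ (S v ∩ T w).Nonempty)
    (hrefl : ∀ v, (S v ∩ T v).Nonempty) :
    lbimimw E ≤ 2 := by
  classical
  set p : V → ℝ := fun v => (hrefl v).some with hpdef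
  have hpS : ∀ v, p v ∈ S v := fun v => ((hrefl v).some_mem).1
  have hpT : ∀ v, p v ∈ T v := fun v => ((hrefl v).some_mem).2
  have hcard : 2 ≤ Fintype.card V := by rwa [← Nat.card_eq_fintype_card]
  by_cases h3 : 3 ≤ Fintype.card V
  · obtain ⟨k, hk⟩ : ∃ k, Fintype.card V = k + 3 := ⟨Fintype.card V - 3, by omega⟩
    let f : V → Lex (ℝ × Fin (Fintype.card V)) := fun v => toLex (p v, (Fintype.equivFin V) v)
    have hfinj : Function.Injective f := by
      intro u v huv
      have h2' : (ofLex (f u)).2 = (ofLex (f v)).2 := by rw [huv]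
      exact (Fintype.equivFin V).injective h2'
    letI : LinearOrder V := LinearOrder.lift' f hfinj
    let σ := monoEquivOfFin V hk
    let idx : V ≃ Fin (k+3) := σ.toEquiv.symm
    have hmono : ∀ u w : V, ((idx u : ℕ) ≤ (idx w : ℕ)) → p u ≤ p w := by
      intro u w h
      have h1 : idx u ≤ idx w := h
      have h2' : σ (idx u) ≤ σ (idx w) := σ.monotone h1
      have h3' : u ≤ w := by simpa [idx] using h2'
      have h4 : f u ≤ f w := h3'
      rcases Prod.Lex.le_iff.mp h4 with h5 | ⟨h5, -⟩
      · exact le_of_lt h5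
      · exact le_of_eq h5
    exact le_trans (Nat.sInf_le ⟨combBD k idx, comb_caterpillar k, rfl⟩)
      (combBD_width_le idx hS hT p hpS hpT hrep hmono)
  · have hc2 : Fintype.card V = 2 := by omega
    let idx : V ≃ Bool := (Fintype.equivFinOfCardEq hc2).trans finTwoEquiv
    exact le_trans (Nat.sInf_le ⟨pairBD idx, pair_caterpillar, rfl⟩)
      (pairBD_width_le idx E)
end

section
/- For every positive integer k there exists an interval digraph G with bimimw(G) ≥ k. -/
open scoped Classical

section NuLemmas
variable {V : Type} [Fintype V] {D : V → V → Prop}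

lemma le_nu {M : Finset (V × V)} (h : IsIndMatching D M) : M.card ≤ nu D := by
  apply le_csSup
  · exact ⟨Fintype.card (V × V), fun n ⟨M', _, hc⟩ => hc ▸ M'.card_le_univ⟩
  · exact ⟨M, h, rfl⟩

lemma nu_le : nu D ≤ Fintype.card (V × V) := by
  have h0 : (0:ℕ) ∈ {n | ∃ M : Finset (V × V), IsIndMatching D M ∧ M.card = n} :=
    ⟨∅, ⟨by simp, by simp⟩, by simp⟩
  apply csSup_le ⟨0, h0⟩
  rintro n ⟨M, _, rfl⟩
  exact M.card_le_univ


end NuLemmas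

section TreeLemmas

variable {L : Type} {T : SimpleGraph L}

lemma bridge_not_reachable (hT : T.IsAcyclic) {s t : L} (h : T.Adj s t) :
    ¬ (T.deleteEdges {s(s, t)}).Reachable s t := by
  have hb := (SimpleGraph.isAcyclic_iff_forall_adj_isBridge.mp hT) h
  exact (SimpleGraph.isBridge_iff.mp hb)

/-- splitting a walk at a deleted edge -/
lemma walk_split {s t : L} {u x : L} (w : T.Walk u x) :
    (T.deleteEdges {s(s, t)}).Reachable u x ∨
      ((T.deleteEdges {s(s, t)}).Reachable u s ∧ (T.deleteEdges {s(s, t)}).Reachable t x) ∨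
      ((T.deleteEdges {s(s, t)}).Reachable u t ∧ (T.deleteEdges {s(s, t)}).Reachable s x) := by
  set D := T.deleteEdges {s(s, t)} with hD
  induction w with
  | nil => exact Or.inl (SimpleGraph.Reachable.refl _)
  | @cons a b c hadj w ih =>
    by_cases he : s(a, b) = s(s, t)
    · rw [Sym2.eq_iff] at he
      rcases he with ⟨rfl, rfl⟩ | ⟨rfl, rfl⟩
      · -- a = s, b = t
        rcases ih with h1 | ⟨h1, h2⟩ | ⟨h1, h2⟩
        · exact Or.inr (Or.inl ⟨SimpleGraph.Reachable.refl _, h1⟩)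
        · exact Or.inr (Or.inl ⟨SimpleGraph.Reachable.refl _, h2⟩)
        · exact Or.inl h2
      · -- a = t, b = s
        rcases ih with h1 | ⟨h1, h2⟩ | ⟨h1, h2⟩
        · exact Or.inr (Or.inr ⟨SimpleGraph.Reachable.refl _, h1⟩)
        · exact Or.inl h2
        · exact Or.inr (Or.inr ⟨SimpleGraph.Reachable.refl _, h2⟩)
    · have hab : D.Adj a b := SimpleGraph.deleteEdges_adj.mpr ⟨hadj, by simpa using he⟩
      have hr : D.Reachable a b := hab.reachable
      rcases ih with h1 | ⟨h1, h2⟩ | ⟨h1, h2⟩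
      · exact Or.inl (hr.trans h1)
      · exact Or.inr (Or.inl ⟨hr.trans h1, h2⟩)
      · exact Or.inr (Or.inr ⟨hr.trans h1, h2⟩)

lemma cover_sides (hT : T.IsTree) {s t : L} (h : T.Adj s t) (x : L) :
    (T.deleteEdges {s(s, t)}).Reachable s x ∨ (T.deleteEdges {s(s, t)}).Reachable t x := by
  obtain ⟨w⟩ := hT.isConnected.preconnected s x
  rcases walk_split (s := s) (t := t) w with h1 | ⟨h1, h2⟩ | ⟨h1, h2⟩
  · exact Or.inl h1
  · exact Or.inr h2
  · exact absurd h1 (bridge_not_reachable hT.IsAcyclic h)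

lemma disj_sides (hT : T.IsTree) {s t : L} (h : T.Adj s t) (x : L) :
    ¬ ((T.deleteEdges {s(s, t)}).Reachable s x ∧ (T.deleteEdges {s(s, t)}).Reachable t x) := by
  rintro ⟨h1, h2⟩
  exact bridge_not_reachable hT.IsAcyclic h (h1.trans h2.symm)

/-- a walk from `a` in `T - as` never visits `s` -/
lemma walk_avoids (hT : T.IsTree) {s a x : L} (h : T.Adj s a)
    (w : (T.deleteEdges {s(a, s)}).Walk a x) : s ∉ w.support := by
  intro hs
  exact bridge_not_reachable hT.IsAcyclic h.symm ⟨w.takeUntil s hs⟩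

/-- moving to a sibling deleted edge: if `a ~ s ~ t`, `a ≠ t`, then the `a`-side of edge `as`
is contained in the `s`-side of edge `st`. -/
lemma reach_shift (hT : T.IsTree) {s t a x : L} (hst : T.Adj s t) (hsa : T.Adj s a)
    (hat : a ≠ t) (hr : (T.deleteEdges {s(a, s)}).Reachable a x) :
    (T.deleteEdges {s(s, t)}).Reachable s x := by
  obtain ⟨w⟩ := hr
  have hs : s ∉ w.support := walk_avoids hT hsa w
  have hw : ∀ e ∈ w.edges, e ∈ (T.deleteEdges {s(s, t)}).edgeSet := by
    intro e he
    have heT : e ∈ T.edgeSet := by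
      have := w.edges_subset_edgeSet he
      rw [SimpleGraph.edgeSet_deleteEdges] at this
      exact this.1
    rw [SimpleGraph.edgeSet_deleteEdges]
    refine ⟨heT, ?_⟩
    intro hmem
    have he' : s(s, t) ∈ w.edges := (Set.mem_singleton_iff.mp hmem) ▸ he
    exact hs (w.fst_mem_support_of_mem_edges he')
  have hadj : (T.deleteEdges {s(s, t)}).Adj s a := by
    rw [SimpleGraph.deleteEdges_adj]
    refine ⟨hsa, ?_⟩
    simp only [Set.mem_singleton_iff, Sym2.eq_iff]
    rintro (⟨-, rfl⟩ | ⟨rfl, -⟩)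
    · exact hat rfl
    · exact hst.ne rfl
  exact hadj.reachable.trans ⟨w.transfer _ hw⟩

/-- decomposing the `s`-side of edge `st` along the first step of a path -/
lemma reach_unshift (hT : T.IsTree) {s t x : L} (hst : T.Adj s t)
    (hr : (T.deleteEdges {s(s, t)}).Reachable s x) (hx : x ≠ s) :
    ∃ c, T.Adj s c ∧ c ≠ t ∧ (T.deleteEdges {s(c, s)}).Reachable c x := by
  obtain ⟨w⟩ := hr
  obtain ⟨q, hq⟩ := w.toPath
  cases q with
  | nil => exact absurd rfl hx
  | @cons _ c _ hadj q' =>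
    have hsc : T.Adj s c := (SimpleGraph.deleteEdges_adj.mp hadj).1
    have hct : c ≠ t := by
      rintro rfl
      exact (SimpleGraph.deleteEdges_adj.mp hadj).2 rfl
    have hs : s ∉ q'.support := by
      have := hq.support_nodup
      rw [SimpleGraph.Walk.support_cons] at this
      exact (List.nodup_cons.mp this).1
    refine ⟨c, hsc, hct, ?_⟩
    have hw : ∀ e ∈ q'.edges, e ∈ (T.deleteEdges {s(c, s)}).edgeSet := by
      intro e he
      have heT : e ∈ T.edgeSet := by
        have := q'.edges_subset_edgeSet he
        rw [SimpleGraph.edgeSet_deleteEdges] at this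
        exact this.1
      rw [SimpleGraph.edgeSet_deleteEdges]
      refine ⟨heT, ?_⟩
      intro hmem
      have he' : s(c, s) ∈ q'.edges := (Set.mem_singleton_iff.mp hmem) ▸ he
      exact hs (q'.snd_mem_support_of_mem_edges he')
    exact ⟨q'.transfer _ hw⟩

end TreeLemmas


section SideLemmas
variable {V : Type} [Fintype V] (bd : BranchDecomp V)

/-- the component of `s` in `T - st`, as a set of tree vertices -/
def BranchDecomp.comp {V : Type} (bd : BranchDecomp V) (s t : bd.L) : Set bd.L :=
  {x | (bd.T.deleteEdges {s(s, t)}).Reachable s x}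

lemma side_swap (s t : bd.L) :
    bd.side t s = {v | (bd.T.deleteEdges {s(s, t)}).Reachable t (bd.toLeaf v)} := by
  unfold BranchDecomp.side
  rw [Sym2.eq_swap]

lemma side_compl {s t : bd.L} (h : bd.T.Adj s t) : (bd.side s t)ᶜ = bd.side t s := by
  ext v
  rw [side_swap bd s t]
  constructor
  · intro hv
    rcases cover_sides bd.isTree h (bd.toLeaf v) with h1 | h1
    · exact absurd h1 hv
    · exact h1
  · intro hv h1
    exact disj_sides bd.isTree h (bd.toLeaf v) ⟨h1, hv⟩

lemma ncard_side_add {s t : bd.L} (h : bd.T.Adj s t) :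
    (bd.side s t).ncard + (bd.side t s).ncard = Nat.card V := by
  rw [← side_compl bd h]
  rw [Set.ncard_add_ncard_compl]

lemma side_ncard_le_one {s t : bd.L} (h : bd.T.Adj s t)
    (hleaf : (bd.T.neighborSet s).ncard = 1) : (bd.side s t).ncard ≤ 1 := by
  haveI := bd.finL
  obtain ⟨x, hx⟩ := Set.ncard_eq_one.mp hleaf
  have htm : t ∈ bd.T.neighborSet s := h
  rw [hx, Set.mem_singleton_iff] at htm
  rw [← htm] at hx
  have key : ∀ y, (bd.T.deleteEdges {s(s, t)}).Reachable s y → y = s := by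
    intro y hy
    obtain ⟨w⟩ := hy
    cases w with
    | nil => rfl
    | @cons _ c _ hadj w' =>
      exfalso
      have h1 := SimpleGraph.deleteEdges_adj.mp hadj
      have hc : c ∈ bd.T.neighborSet s := h1.1
      rw [hx] at hc
      rw [Set.mem_singleton_iff.mp hc] at h1
      exact h1.2 rfl
  rw [Set.ncard_le_one (Set.toFinite _)]
  intro a ha b hb
  exact bd.inj ((key _ ha).trans (key _ hb).symm)

/-- the two-branch decomposition at an internal vertex -/
lemma branch_step {s t : bd.L} (hst : bd.T.Adj s t) (h2 : 2 ≤ (bd.side s t).ncard) :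
    ∃ a, bd.T.Adj s a ∧ a ≠ t ∧ bd.side a s ⊆ bd.side s t ∧
      (bd.side s t).ncard ≤ 2 * (bd.side a s).ncard ∧
      (bd.comp a s).ncard < (bd.comp s t).ncard := by
  haveI := bd.finL
  -- s is internal
  have hdeg : (bd.T.neighborSet s).ncard = 3 := by
    rcases bd.subcubic s with h1 | h1
    · exact absurd (side_ncard_le_one bd hst h1) (by omega)
    · exact h1
  -- extract the two other neighbors
  obtain ⟨x, y, z, hxy, hxz, hyz, hset⟩ := Set.ncard_eq_three.mp hdeg
  have ht : t ∈ bd.T.neighborSet s := hst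
  have habs : ∃ a b : bd.L, a ≠ b ∧ a ≠ t ∧ b ≠ t ∧
      bd.T.neighborSet s = {t, a, b} := by
    rw [hset] at ht ⊢
    rcases ht with rfl | rfl | rfl
    · exact ⟨y, z, hyz, fun h => hxy h.symm, fun h => hxz h.symm, rfl⟩
    · exact ⟨x, z, hxz, hxy, fun h => hyz h.symm, by ext u; simp; tauto⟩
    · exact ⟨x, y, hxy, hxz, hyz, by ext u; simp; tauto⟩
  obtain ⟨a, b, hab, hat, hbt, hnbr⟩ := habs
  have hsa : bd.T.Adj s a := by
    have : a ∈ bd.T.neighborSet s := by rw [hnbr]; simp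
    exact this
  have hsb : bd.T.Adj s b := by
    have : b ∈ bd.T.neighborSet s := by rw [hnbr]; simp
    exact this
  -- side s t ⊆ side a s ∪ side b s
  have hsub : bd.side s t ⊆ bd.side a s ∪ bd.side b s := by
    intro v hv
    have hxs : bd.toLeaf v ≠ s := by
      intro hh
      have := bd.mem_leaf v
      rw [hh, hdeg] at this
      omega
    obtain ⟨c, hsc, hct, hr⟩ := reach_unshift bd.isTree hst hv hxs
    have hc : c ∈ bd.T.neighborSet s := hsc
    rw [hnbr] at hc
    rcases hc with rfl | rfl | rfl
    · exact absurd rfl hct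
    · exact Or.inl hr
    · exact Or.inr hr
  have hsubA : bd.side a s ⊆ bd.side s t := fun v hv =>
    reach_shift bd.isTree hst hsa hat hv
  have hsubB : bd.side b s ⊆ bd.side s t := fun v hv =>
    reach_shift bd.isTree hst hsb hbt hv
  have hcard : (bd.side s t).ncard ≤ (bd.side a s).ncard + (bd.side b s).ncard :=
    le_trans (Set.ncard_le_ncard hsub (Set.toFinite _)) (Set.ncard_union_le _ _)
  -- comp shrink for both a and b
  have hcomp : ∀ c, bd.T.Adj s c → c ≠ t → (bd.comp c s).ncard < (bd.comp s t).ncard := by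
    intro c hsc hct
    apply Set.ncard_lt_ncard _ (Set.toFinite _)
    constructor
    · intro x hx
      exact reach_shift bd.isTree hst hsc hct hx
    · intro hcon
      have hs : s ∈ bd.comp s t := SimpleGraph.Reachable.refl _
      have := hcon hs
      exact bridge_not_reachable bd.isTree.IsAcyclic hsc.symm this
  rcases le_total ((bd.side b s).ncard) ((bd.side a s).ncard) with hle | hle
  · exact ⟨a, hsa, hat, hsubA, by omega, hcomp a hsa hat⟩
  · exact ⟨b, hsb, hbt, hsubB, by omega, hcomp b hsb hbt⟩

lemma exists_balanced (q : ℕ) (hq : 1 ≤ q) (hn : 3 * q ≤ Nat.card V) :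
    ∃ s t, bd.T.Adj s t ∧ q ≤ (bd.side s t).ncard ∧ q ≤ (bd.side t s).ncard := by
  haveI := bd.finL
  set n := Nat.card V with hnn
  set N := Nat.card bd.L with hN
  -- an adjacent pair exists
  have hadj : ∃ p : bd.L × bd.L, bd.T.Adj p.1 p.2 := by
    have h2 : (1:ℕ) < Nat.card bd.L := bd.two_le
    haveI : Nontrivial bd.L := Finite.one_lt_card_iff_nontrivial.mp h2
    obtain ⟨x, y, hxy⟩ := exists_pair_ne bd.L
    obtain ⟨w⟩ := bd.isTree.isConnected.preconnected x y
    cases w with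
    | nil => exact absurd rfl hxy
    | cons h _ => exact ⟨(_, _), h⟩
  -- the constraint set
  set P : Set (bd.L × bd.L) :=
    {p | bd.T.Adj p.1 p.2 ∧ q ≤ (bd.side p.1 p.2).ncard} with hP
  have hPne : P.Nonempty := by
    obtain ⟨⟨s, t⟩, hst⟩ := hadj
    dsimp only at hst
    have hsum := ncard_side_add bd hst
    rcases le_total q ((bd.side s t).ncard) with h | h
    · exact ⟨(s, t), hst, h⟩
    · refine ⟨(t, s), hst.symm, ?_⟩
      show q ≤ (bd.side t s).ncard
      omega
  obtain ⟨⟨s, t⟩, hmem, hmin⟩ := Set.exists_min_image P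
    (fun p => (bd.side p.1 p.2).ncard * (N + 1) + (bd.comp p.1 p.2).ncard)
    (Set.toFinite _) hPne
  dsimp only at hmin
  obtain ⟨hst, hq1⟩ := hmem
  dsimp only at hst hq1
  refine ⟨s, t, hst, hq1, ?_⟩
  by_contra hcon
  push_neg at hcon
  have hsum := ncard_side_add bd hst
  have h2 : 2 * q + 1 ≤ (bd.side s t).ncard := by omega
  obtain ⟨a, hsa, hat, _, hhalf, hcomplt⟩ := branch_step bd hst (by omega)
  have haq : q ≤ (bd.side a s).ncard := by omega
  have haP : (a, s) ∈ P := ⟨hsa.symm, haq⟩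
  have hle := hmin (a, s) haP
  dsimp only at hle
  have hsle : (bd.side a s).ncard ≤ (bd.side s t).ncard :=
    Set.ncard_le_ncard ‹bd.side a s ⊆ bd.side s t› (Set.toFinite _)
  have hcN : (bd.comp a s).ncard ≤ N := by
    rw [hN, ← Set.ncard_univ]
    exact Set.ncard_le_ncard (Set.subset_univ _) (Set.toFinite _)
  have hcN2 : (bd.comp s t).ncard ≤ N := by
    rw [hN, ← Set.ncard_univ]
    exact Set.ncard_le_ncard (Set.subset_univ _) (Set.toFinite _)
  rcases lt_or_eq_of_le hsle with hlt | heq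
  · have hkey : (bd.side a s).ncard * (N + 1) + (bd.comp a s).ncard <
        (bd.side s t).ncard * (N + 1) := by
      calc (bd.side a s).ncard * (N + 1) + (bd.comp a s).ncard
          ≤ (bd.side a s).ncard * (N + 1) + N := by omega
        _ < ((bd.side a s).ncard + 1) * (N + 1) := by ring_nf; omega
        _ ≤ (bd.side s t).ncard * (N + 1) := Nat.mul_le_mul_right _ (by omega)
    omega
  · rw [heq] at hle
    omega

end SideLemmas

section Construction

variable {m : ℕ}

/-- the digraph `(i,j) → (i',j')` iff `i = j'` -/
def Erel (m : ℕ) : (Fin m × Fin m) → (Fin m × Fin m) → Prop := fun v w => v.1 = w.2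

lemma matching_bound (X Y : Set (Fin m × Fin m)) (hdisj : ∀ v, v ∈ X → v ∉ Y)
    (D' : Finset (Fin m)) (f g : Fin m → Fin m)
    (hf : ∀ i ∈ D', ((i, f i) : Fin m × Fin m) ∈ X)
    (hg : ∀ i ∈ D', ((g i, i) : Fin m × Fin m) ∈ Y) :
    D'.card ≤ nu (cutRel (Erel m) X Y) := by
  set F : Fin m → (Fin m × Fin m) × (Fin m × Fin m) :=
    fun i => ((i, f i), (g i, i)) with hF
  have hFinj : Set.InjOn F D' := by
    intro i _ j _ hij
    exact congrArg (fun p => p.1.1) hij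
  have hmatch : IsIndMatching (cutRel (Erel m) X Y) (D'.image F) := by
    constructor
    · intro e he
      obtain ⟨i, hi, rfl⟩ := Finset.mem_image.mp he
      exact ⟨hf i hi, hg i hi, rfl⟩
    · intro e he e' he' hne x hx y hy
      obtain ⟨i, hi, rfl⟩ := Finset.mem_image.mp he
      obtain ⟨j, hj, rfl⟩ := Finset.mem_image.mp he'
      have hij : i ≠ j := fun h => hne (by rw [h])
      rcases hx with rfl | rfl <;> rcases hy with rfl | rfl <;>
        simp only [hF]
      · constructor
        · intro h
          exact hij (congrArg Prod.fst h)
        · rintro ⟨-, hY, -⟩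
          exact hdisj _ (hf j hj) hY
      · constructor
        · intro h
          exact hdisj _ (hf i hi) (h ▸ hg j hj)
        · rintro ⟨-, -, hE⟩
          exact hij hE
      · constructor
        · intro h
          exact hdisj _ (hf j hj) (h ▸ hg i hi)
        · rintro ⟨hX, -, -⟩
          exact hdisj _ hX (hg i hi)
      · constructor
        · intro h
          exact hij (congrArg Prod.snd h)
        · rintro ⟨hX, -, -⟩
          exact hdisj _ hX (hg i hi)
  have hcard : (D'.image F).card = D'.card := Finset.card_image_of_injOn hFinj
  calc D'.card = (D'.image F).card := hcard.symm
    _ ≤ nu (cutRel (Erel m) X Y) := le_nu hmatch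

/-- the "cross" at index `i` -/
def cross (m : ℕ) (i : Fin m) : Set (Fin m × Fin m) := {v | v.1 = i ∨ v.2 = i}

lemma cut_lower {k m : ℕ} (hk : 1 ≤ k) (hm : m = 2*k) (A : Set (Fin m × Fin m))
    (hA : (k-1)^2 + 1 ≤ A.ncard) (hA' : (k-1)^2 + 1 ≤ Aᶜ.ncard) :
    k ≤ bimimCut (Erel m) A := by
  set D : Finset (Fin m) :=
    Finset.univ.filter (fun i => (∃ v ∈ cross m i, v ∈ A) ∧ (∃ v ∈ cross m i, v ∈ Aᶜ))
    with hD
  have hsq : (k-1)^2 = (k-1)*(k-1) := by ring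
  rw [hsq] at hA hA'
  -- Step 1: k ≤ D.card
  have hDcard : k ≤ D.card := by
    by_contra hcon
    push_neg at hcon
    have hDk : D.card ≤ k - 1 := by omega
    have hex : ∃ i, i ∉ D := by
      by_contra hall
      push_neg at hall
      have heq : D = Finset.univ := Finset.eq_univ_iff_forall.mpr hall
      have : Fintype.card (Fin m) ≤ k - 1 := by
        rw [← Finset.card_univ, ← heq]; exact hDk
      rw [Fintype.card_fin] at this
      omega
    obtain ⟨i₀, hi₀⟩ := hex
    have hns : ¬((∃ v ∈ cross m i₀, v ∈ A) ∧ (∃ v ∈ cross m i₀, v ∈ Aᶜ)) := by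
      intro h
      exact hi₀ (Finset.mem_filter.mpr ⟨Finset.mem_univ _, h⟩)
    have hmono : (∀ v ∈ cross m i₀, v ∈ A) ∨ (∀ v ∈ cross m i₀, v ∈ Aᶜ) := by
      rcases Classical.em (∃ v ∈ cross m i₀, v ∈ A) with h | h
      · left
        intro v hv
        by_contra hvA
        exact hns ⟨h, ⟨v, hv, hvA⟩⟩
      · right
        intro v hv
        by_contra hvA
        rw [Set.notMem_compl_iff] at hvA
        exact h ⟨v, hv, hvA⟩
    have hprod : ∀ B : Set (Fin m × Fin m), B ⊆ {v | v.1 ∈ D ∧ v.2 ∈ D} →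
        B.ncard ≤ (k-1)*(k-1) := by
      intro B hB
      have h1 : B.ncard ≤ ((D ×ˢ D : Finset (Fin m × Fin m)) : Set (Fin m × Fin m)).ncard := by
        apply Set.ncard_le_ncard _ (Set.toFinite _)
        intro v hv
        rw [Finset.coe_product]
        exact ⟨(hB hv).1, (hB hv).2⟩
      rw [Set.ncard_coe_finset, Finset.card_product] at h1
      exact le_trans h1 (Nat.mul_le_mul hDk hDk)
    have hmemD : ∀ (i : Fin m), (∃ v ∈ cross m i, v ∈ A) → (∃ v ∈ cross m i, v ∈ Aᶜ) →
        i ∈ D := fun i h1 h2 => Finset.mem_filter.mpr ⟨Finset.mem_univ _, h1, h2⟩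
    rcases hmono with hcA | hcA
    · -- cross i₀ ⊆ A ; then Aᶜ ⊆ D ×ˢ D
      have hsub : Aᶜ ⊆ {v | v.1 ∈ D ∧ v.2 ∈ D} := by
        intro v hv
        constructor
        · exact hmemD v.1 ⟨(v.1, i₀), Or.inl rfl, hcA _ (Or.inr rfl)⟩ ⟨v, Or.inl rfl, hv⟩
        · exact hmemD v.2 ⟨(i₀, v.2), Or.inr rfl, hcA _ (Or.inl rfl)⟩ ⟨v, Or.inr rfl, hv⟩
      have := hprod Aᶜ hsub
      omega
    · -- cross i₀ ⊆ Aᶜ ; then A ⊆ D ×ˢ D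
      have hsub : A ⊆ {v | v.1 ∈ D ∧ v.2 ∈ D} := by
        intro v hv
        constructor
        · exact hmemD v.1 ⟨v, Or.inl rfl, hv⟩ ⟨(v.1, i₀), Or.inl rfl, hcA _ (Or.inr rfl)⟩
        · exact hmemD v.2 ⟨v, Or.inr rfl, hv⟩ ⟨(i₀, v.2), Or.inr rfl, hcA _ (Or.inl rfl)⟩
      have := hprod A hsub
      omega
  -- Step 2: split D into two directions
  set D1 : Finset (Fin m) :=
    D.filter (fun i => (∃ j, ((i, j) : Fin m × Fin m) ∈ A) ∧
      (∃ j, ((j, i) : Fin m × Fin m) ∈ Aᶜ)) with hD1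
  set D2 : Finset (Fin m) := D \ D1 with hD2
  have hD2prop : ∀ i ∈ D2, (∃ j, ((i, j) : Fin m × Fin m) ∈ Aᶜ) ∧
      (∃ j, ((j, i) : Fin m × Fin m) ∈ A) := by
    intro i hi
    rw [hD2, Finset.mem_sdiff] at hi
    obtain ⟨hiD, hiD1⟩ := hi
    have hsplit := (Finset.mem_filter.mp hiD).2
    obtain ⟨⟨vA, hvA1, hvA2⟩, ⟨vB, hvB1, hvB2⟩⟩ := hsplit
    have hRA : (∃ j, ((i, j) : Fin m × Fin m) ∈ A) ∨ (∃ j, ((j, i) : Fin m × Fin m) ∈ A) := by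
      rcases hvA1 with h | h
      · exact Or.inl ⟨vA.2, by rwa [show ((i, vA.2) : Fin m × Fin m) = vA by
          rw [← h]]⟩
      · exact Or.inr ⟨vA.1, by rwa [show ((vA.1, i) : Fin m × Fin m) = vA by
          rw [← h]]⟩
    have hRB : (∃ j, ((i, j) : Fin m × Fin m) ∈ Aᶜ) ∨ (∃ j, ((j, i) : Fin m × Fin m) ∈ Aᶜ) := by
      rcases hvB1 with h | h
      · exact Or.inl ⟨vB.2, by rwa [show ((i, vB.2) : Fin m × Fin m) = vB by
          rw [← h]]⟩
      · exact Or.inr ⟨vB.1, by rwa [show ((vB.1, i) : Fin m × Fin m) = vB by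
          rw [← h]]⟩
    have hnD1 : ¬((∃ j, ((i, j) : Fin m × Fin m) ∈ A) ∧
        (∃ j, ((j, i) : Fin m × Fin m) ∈ Aᶜ)) := by
      intro h
      exact hiD1 (Finset.mem_filter.mpr ⟨hiD, h⟩)
    rcases hRA with h1 | h1
    · -- RA holds; then CĀ fails, so C ⊆ A hence CA; and RĀ from hRB
      have hnCc : ¬(∃ j, ((j, i) : Fin m × Fin m) ∈ Aᶜ) := fun h => hnD1 ⟨h1, h⟩
      push_neg at hnCc
      simp only [Set.notMem_compl_iff] at hnCc
      rcases hRB with h2 | h2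
      · exact ⟨h2, ⟨i, hnCc i⟩⟩
      · obtain ⟨j, hj⟩ := h2
        exact absurd (hnCc j) hj
    · -- CA holds
      rcases hRB with h2 | h2
      · exact ⟨h2, h1⟩
      · -- CĀ: together with CA... need RĀ: RA fails here? no: we are in case CA (h1).
        -- h2 : CĀ. Then ¬(RA ∧ CĀ) gives ¬RA, so R ⊆ Aᶜ, giving RĀ.
        have hnRA : ¬(∃ j, ((i, j) : Fin m × Fin m) ∈ A) := fun h => hnD1 ⟨h, h2⟩
        push_neg at hnRA
        exact ⟨⟨i, hnRA i⟩, h1⟩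
  -- choice functions and the two matchings
  have hnu1 : D1.card ≤ nu (cutRel (Erel m) A Aᶜ) := by
    apply matching_bound A Aᶜ (fun v hv hv' => hv' hv) D1
      (f := fun i => if h : ∃ j, ((i, j) : Fin m × Fin m) ∈ A then h.choose else i)
      (g := fun i => if h : ∃ j, ((j, i) : Fin m × Fin m) ∈ Aᶜ then h.choose else i)
    · intro i hi
      have h := (Finset.mem_filter.mp hi).2.1
      rw [dif_pos h]
      exact h.choose_spec
    · intro i hi
      have h := (Finset.mem_filter.mp hi).2.2
      rw [dif_pos h]
      exact h.choose_spec
  have hnu2 : D2.card ≤ nu (cutRel (Erel m) Aᶜ A) := by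
    apply matching_bound Aᶜ A (fun v hv hv' => hv hv') D2
      (f := fun i => if h : ∃ j, ((i, j) : Fin m × Fin m) ∈ Aᶜ then h.choose else i)
      (g := fun i => if h : ∃ j, ((j, i) : Fin m × Fin m) ∈ A then h.choose else i)
    · intro i hi
      have h := (hD2prop i hi).1
      rw [dif_pos h]
      exact h.choose_spec
    · intro i hi
      have h := (hD2prop i hi).2
      rw [dif_pos h]
      exact h.choose_spec
  have hsplitcard : D1.card + D2.card = D.card := by
    rw [hD2]
    have hsub : D1 ⊆ D := Finset.filter_subset _ _
    have h1 := Finset.card_sdiff_of_subset hsub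
    have h2 := Finset.card_le_card hsub
    omega
  unfold bimimCut
  omega

end Construction

section ParentTree
variable {L : Type}

def parentGraph (p : L → L) : SimpleGraph L where
  Adj x y := x ≠ y ∧ (p x = y ∨ p y = x)
  symm := ⟨by
    rintro x y ⟨h1, h2⟩
    exact ⟨h1.symm, h2.symm⟩⟩
  loopless := ⟨fun x hx => hx.1 rfl⟩

variable {p : L → L} {r : L} {h : L → ℕ}

lemma parent_reach_root (hr : p r = r) (hd : ∀ x, x ≠ r → h (p x) < h x) :
    ∀ (n : ℕ) (x : L), h x ≤ n → (parentGraph p).Reachable x r := by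
  intro n
  induction n with
  | zero =>
    intro x hx
    by_cases hxr : x = r
    · subst hxr; rfl
    · exact absurd (hd x hxr) (by omega)
  | succ n ih =>
    intro x hx
    by_cases hxr : x = r
    · subst hxr; rfl
    · have hadj : (parentGraph p).Adj x (p x) := by
        refine ⟨?_, Or.inl rfl⟩
        intro he
        have := hd x hxr
        rw [← he] at this
        omega
      exact hadj.reachable.trans (ih (p x) (by have := hd x hxr; omega))

lemma parent_bridge (hr : p r = r) (hd : ∀ x, x ≠ r → h (p x) < h x)
    (x : L) (hx : x ≠ p x) :
    ¬ ((parentGraph p).deleteEdges {s(x, p x)}).Reachable x (p x) := by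
  intro hreach
  set S : Set L := {y | ∃ n, p^[n] y = x} with hS
  have hxr : x ≠ r := fun he => hx (by rw [he, hr])
  have hiter : ∀ (n : ℕ) (y : L), h (p^[n] y) ≤ h y := by
    intro n
    induction n with
    | zero => intro y; simp
    | succ n ih =>
      intro y
      rw [Function.iterate_succ_apply]
      refine le_trans (ih (p y)) ?_
      by_cases hyr : y = r
      · rw [hyr, hr]
      · exact le_of_lt (hd y hyr)
  have hpxS : p x ∉ S := by
    rintro ⟨n, hn⟩
    have h1 : h x ≤ h (p x) := by
      conv_lhs => rw [← hn]
      exact hiter n (p x)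
    have := hd x hxr
    omega
  have hclosed : ∀ a b, ((parentGraph p).deleteEdges {s(x, p x)}).Adj a b →
      a ∈ S → b ∈ S := by
    rintro a b hab ⟨n, hn⟩
    obtain ⟨hadj, hne⟩ := SimpleGraph.deleteEdges_adj.mp hab
    obtain ⟨hab', hp⟩ := hadj
    rcases hp with hpa | hpb
    · cases n with
      | zero =>
        exfalso
        simp only [Function.iterate_zero, id_eq] at hn
        subst hn
        apply hne
        rw [Set.mem_singleton_iff, ← hpa]
      | succ nn =>
        rw [Function.iterate_succ_apply, hpa] at hn
        exact ⟨nn, hn⟩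
    · refine ⟨n + 1, ?_⟩
      rw [Function.iterate_succ_apply, hpb]
      exact hn
  have hstay : ∀ {u v2 : L} (w : ((parentGraph p).deleteEdges {s(x, p x)}).Walk u v2),
      u ∈ S → v2 ∈ S := by
    intro u v2 w
    induction w with
    | nil => exact id
    | cons hadj _ ih => exact fun hu => ih (hclosed _ _ hadj hu)
  obtain ⟨w⟩ := hreach
  exact hpxS (hstay w ⟨0, rfl⟩)

lemma parent_isTree [Finite L] (hr : p r = r) (hd : ∀ x, x ≠ r → h (p x) < h x) :
    (parentGraph p).IsTree := by
  constructor
  · rw [SimpleGraph.connected_iff]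
    refine ⟨?_, ⟨r⟩⟩
    intro a b
    exact (parent_reach_root hr hd (h a) a le_rfl).trans
      (parent_reach_root hr hd (h b) b le_rfl).symm
  · rw [SimpleGraph.isAcyclic_iff_forall_adj_isBridge]
    intro a b hab
    rw [SimpleGraph.isBridge_iff]
    obtain ⟨hne, hp | hp⟩ := hab
    · have := parent_bridge (h := h) hr hd a (by rw [hp]; exact hne)
      rw [hp] at this
      exact this
    · have := parent_bridge (h := h) hr hd b (by rw [hp]; exact hne.symm)
      rw [hp] at this
      intro hre
      rw [Sym2.eq_swap] at hre
      exact this hre.symm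

lemma parentGraph_neighborSet (p : L → L) (x : L) :
    (parentGraph p).neighborSet x = {y | x ≠ y ∧ (p x = y ∨ p y = x)} := rfl

end ParentTree

section Caterpillar

/-- attach function for the caterpillar: leaf `i` attaches to spine `min (i-1) (n-3)` -/
def attachF (n : ℕ) (hn : 4 ≤ n) (i : Fin n) : Fin (n - 2) :=
  ⟨min (i.val - 1) (n - 3), by omega⟩

/-- parent map for the caterpillar on `Fin n ⊕ Fin (n-2)` -/
def catP (n : ℕ) (hn : 4 ≤ n) : (Fin n ⊕ Fin (n - 2)) → (Fin n ⊕ Fin (n - 2))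
  | Sum.inl i => Sum.inr (attachF n hn i)
  | Sum.inr j => Sum.inr ⟨j.val - 1, by omega⟩

def catH (n : ℕ) : (Fin n ⊕ Fin (n - 2)) → ℕ
  | Sum.inl _ => n
  | Sum.inr j => j.val

def catR (n : ℕ) (hn : 4 ≤ n) : Fin n ⊕ Fin (n - 2) := Sum.inr ⟨0, by omega⟩

lemma catP_root (n : ℕ) (hn : 4 ≤ n) : catP n hn (catR n hn) = catR n hn := by
  simp [catP, catR]

lemma catH_desc (n : ℕ) (hn : 4 ≤ n) :
    ∀ x, x ≠ catR n hn → catH n (catP n hn x) < catH n x := by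
  rintro (i | j) hx
  · simp only [catP, catH, attachF]
    omega
  · simp only [catP, catH]
    have hj : j.val < n - 2 := j.isLt
    have hj0 : j.val ≠ 0 := by
      intro h0
      apply hx
      simp only [catR, Sum.inr.injEq]
      exact Fin.ext h0
    omega

/-- the caterpillar graph -/
def catG (n : ℕ) (hn : 4 ≤ n) : SimpleGraph (Fin n ⊕ Fin (n - 2)) :=
  parentGraph (catP n hn)

lemma catG_isTree (n : ℕ) (hn : 4 ≤ n) : (catG n hn).IsTree :=
  parent_isTree (catP_root n hn) (catH_desc n hn)

lemma cat_leaf_nbhd (n : ℕ) (hn : 4 ≤ n) (i : Fin n) :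
    (catG n hn).neighborSet (Sum.inl i) = {Sum.inr (attachF n hn i)} := by
  ext y
  rw [catG, parentGraph_neighborSet]
  constructor
  · rintro ⟨hne, hp | hp⟩
    · rw [← hp]
      rfl
    · exfalso
      rcases y with a | b <;> simp [catP] at hp
  · rintro rfl
    exact ⟨by simp, Or.inl rfl⟩

lemma cat_leaf_ncard (n : ℕ) (hn : 4 ≤ n) (i : Fin n) :
    ((catG n hn).neighborSet (Sum.inl i)).ncard = 1 := by
  rw [cat_leaf_nbhd n hn i, Set.ncard_singleton]

lemma cat_spine_nbhd (n : ℕ) (hn : 4 ≤ n) (j : Fin (n - 2)) :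
    ∃ a b c, a ≠ b ∧ a ≠ c ∧ b ≠ c ∧ (catG n hn).neighborSet (Sum.inr j) = {a, b, c} := by
  have hj : j.val < n - 2 := j.isLt
  rcases Nat.eq_zero_or_pos j.val with h0 | h1
  · -- j = 0 : neighbors are spine 1, leaf 0, leaf 1
    refine ⟨Sum.inr ⟨1, by omega⟩, Sum.inl ⟨0, by omega⟩, Sum.inl ⟨1, by omega⟩,
      by simp, by simp, by simp [Fin.ext_iff], ?_⟩
    ext y
    rw [catG, parentGraph_neighborSet]
    rcases y with a | b
    · have ha : a.val < n := a.isLt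
      simp [catP, attachF, Sum.inl.injEq, Fin.ext_iff, Set.mem_insert_iff]
      omega
    · have hb : b.val < n - 2 := b.isLt
      simp [catP, attachF, Sum.inr.injEq, Fin.ext_iff, Set.mem_insert_iff]
      omega
  · rcases Nat.lt_or_ge j.val (n - 3) with h2 | h2
    · -- middle: 1 ≤ j < n-3 : neighbors spine (j-1), spine (j+1), leaf (j+1)
      refine ⟨Sum.inr ⟨j.val - 1, by omega⟩, Sum.inr ⟨j.val + 1, by omega⟩,
        Sum.inl ⟨j.val + 1, by omega⟩, by simp only [ne_eq, Sum.inr.injEq, Fin.ext_iff]; omega, by simp, by simp, ?_⟩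
      ext y
      rw [catG, parentGraph_neighborSet]
      rcases y with a | b
      · have ha : a.val < n := a.isLt
        simp [catP, attachF, Sum.inl.injEq, Fin.ext_iff, Set.mem_insert_iff]
        omega
      · have hb : b.val < n - 2 := b.isLt
        simp [catP, attachF, Sum.inr.injEq, Fin.ext_iff, Set.mem_insert_iff]
        omega
    · -- end: j = n-3 : neighbors spine (n-4), leaf (n-2), leaf (n-1)
      have hj3 : j.val = n - 3 := by omega
      refine ⟨Sum.inr ⟨j.val - 1, by omega⟩, Sum.inl ⟨n - 2, by omega⟩,
        Sum.inl ⟨n - 1, by omega⟩, by simp, by simp, by simp only [ne_eq, Sum.inl.injEq, Fin.ext_iff]; omega, ?_⟩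
      ext y
      rw [catG, parentGraph_neighborSet]
      rcases y with a | b
      · have ha : a.val < n := a.isLt
        simp [catP, attachF, Sum.inl.injEq, Fin.ext_iff, Set.mem_insert_iff]
        omega
      · have hb : b.val < n - 2 := b.isLt
        simp [catP, attachF, Sum.inr.injEq, Fin.ext_iff, Set.mem_insert_iff]
        omega

lemma cat_spine_ncard (n : ℕ) (hn : 4 ≤ n) (j : Fin (n - 2)) :
    ((catG n hn).neighborSet (Sum.inr j)).ncard = 3 := by
  obtain ⟨a, b, c, hab, hac, hbc, hset⟩ := cat_spine_nbhd n hn j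
  rw [hset]
  exact Set.ncard_eq_three.mpr ⟨a, b, c, hab, hac, hbc, rfl⟩

/-- existence of a branch decomposition for any finite type with at least 4 elements -/
lemma exists_branchDecomp (V : Type) [Fintype V] (hV : 4 ≤ Fintype.card V) :
    Nonempty (BranchDecomp V) := by
  set n := Fintype.card V with hn
  have hn4 : 4 ≤ n := hV
  have e : V ≃ Fin n := Fintype.equivFin V
  refine ⟨⟨Fin n ⊕ Fin (n - 2), inferInstance, catG n hn4, catG_isTree n hn4, ?_,
    ?_, fun v => Sum.inl (e v), ?_, ?_, ?_⟩⟩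
  · -- two_le
    rw [Nat.card_eq_fintype_card]
    simp only [Fintype.card_sum, Fintype.card_fin]
    omega
  · -- subcubic
    rintro (i | j)
    · exact Or.inl (cat_leaf_ncard n hn4 i)
    · exact Or.inr (cat_spine_ncard n hn4 j)
  · -- inj
    intro u v huv
    exact e.injective (Sum.inl.injEq _ _ ▸ huv : e u = e v)
  · -- mem_leaf
    intro v
    exact cat_leaf_ncard n hn4 (e v)
  · -- surj
    rintro (i | j) ht
    · exact ⟨e.symm i, by simp⟩
    · rw [cat_spine_ncard n hn4 j] at ht
      omega

end Caterpillar


lemma width_lower {k m : ℕ} (hk : 1 ≤ k) (hm : m = 2 * k)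
    (bd : BranchDecomp (Fin m × Fin m)) : k ≤ bd.width (Erel m) := by
  have hq3 : 3 * ((k - 1) ^ 2 + 1) ≤ Nat.card (Fin m × Fin m) := by
    rw [Nat.card_eq_fintype_card, Fintype.card_prod, Fintype.card_fin]
    obtain ⟨j, rfl⟩ : ∃ j, k = j + 1 := ⟨k - 1, by omega⟩
    subst hm
    simp only [Nat.add_sub_cancel]
    nlinarith
  obtain ⟨s, t, hst, h1, h2⟩ := exists_balanced bd ((k - 1) ^ 2 + 1) (by omega) hq3
  have hcompl : (bd.side s t)ᶜ = bd.side t s := side_compl bd hst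
  have hcut : k ≤ bimimCut (Erel m) (bd.side s t) := by
    apply cut_lower hk hm _ h1
    rw [hcompl]
    exact h2
  have hmem : bimimCut (Erel m) (bd.side s t) ∈
      {n | ∃ t₁ t₂, bd.T.Adj t₁ t₂ ∧ n = bimimCut (Erel m) (bd.side t₁ t₂)} :=
    ⟨s, t, hst, rfl⟩
  have hbdd : BddAbove {n | ∃ t₁ t₂, bd.T.Adj t₁ t₂ ∧
      n = bimimCut (Erel m) (bd.side t₁ t₂)} := by
    refine ⟨2 * Fintype.card ((Fin m × Fin m) × (Fin m × Fin m)), ?_⟩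
    rintro x ⟨t₁, t₂, -, rfl⟩
    unfold bimimCut
    have hb1 := nu_le (V := Fin m × Fin m)
      (D := cutRel (Erel m) (bd.side t₁ t₂) (bd.side t₁ t₂)ᶜ)
    have hb2 := nu_le (V := Fin m × Fin m)
      (D := cutRel (Erel m) (bd.side t₁ t₂)ᶜ (bd.side t₁ t₂))
    omega
  exact le_trans hcut (le_csSup hbdd hmem)

theorem stmt_10 (k : ℕ) (hk : 1 ≤ k) :
    ∃ (V : Type) (_ : Fintype V) (E : V → V → Prop) (S T : V → Set ℝ),
      (∀ v, ∃ a b : ℝ, a ≤ b ∧ S v = Set.Icc a b) ∧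
        (∀ v, ∃ a b : ℝ, a ≤ b ∧ T v = Set.Icc a b) ∧
        (∀ v w, E v w ↔ (S v ∩ T w).Nonempty) ∧
        k ≤ bimimw E := by
  refine ⟨Fin (2 * k) × Fin (2 * k), inferInstance, Erel (2 * k),
    fun v => Set.Icc ((v.1.val : ℝ)) v.1.val, fun v => Set.Icc ((v.2.val : ℝ)) v.2.val,
    fun v => ⟨_, _, le_rfl, rfl⟩, fun v => ⟨_, _, le_rfl, rfl⟩, ?_, ?_⟩
  · intro v w
    unfold Erel
    show v.1 = w.2 ↔
      (Set.Icc ((v.1.val : ℝ)) v.1.val ∩ Set.Icc ((w.2.val : ℝ)) w.2.val).Nonempty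
    rw [Set.Icc_self, Set.Icc_self, Set.singleton_inter_nonempty, Set.mem_singleton_iff,
      Nat.cast_inj, Fin.val_inj]
  · have hcard : 4 ≤ Fintype.card (Fin (2 * k) × Fin (2 * k)) := by
      rw [Fintype.card_prod, Fintype.card_fin]
      nlinarith
    obtain ⟨bd⟩ := exists_branchDecomp _ hcard
    have hne : {n | ∃ bd : BranchDecomp (Fin (2 * k) × Fin (2 * k)),
        bd.width (Erel (2 * k)) = n}.Nonempty := ⟨bd.width (Erel (2 * k)), ⟨bd, rfl⟩⟩
    apply le_csInf hne
    rintro b ⟨bd', rfl⟩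
    exact width_lower hk rfl bd'
end
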